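/- arXiv:2010.00930 — 3 statements merged into one kernel-verified Lean document; each statement's English description precedes it below -/
import Mathlib

section
/- Let A_S be a nested Ish arrangement in ℝ^n. Then the number of regions of A_S is r_S = ∏_{k=2}^{n} (n + 1 + |S_{1,k}| − k). -/
open scoped Classical

/-- The derived sets `S⁻ᵢⱼ` of nonnegative integers:
for `i < j`, `S⁻ᵢⱼ = {s ≥ 0 : -s ∈ Sᵢⱼ}`, and `S⁻ⱼᵢ = {0} ∪ {s > 0 : s ∈ Sᵢⱼ}`. -/
def Sminus {n : ℕ} (S : Fin n → Fin n → Finset ℤ) (i j : Fin n) : Set ℕ :=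
  if i < j then {s : ℕ | -(s : ℤ) ∈ S i j}
  else {0} ∪ {s : ℕ | 0 < s ∧ (s : ℤ) ∈ S j i}

/-- `m`: the maximal absolute value of an element of some `S i j` (`i < j`). -/
def mOf {n : ℕ} (S : Fin n → Fin n → Finset ℤ) : ℕ :=
  Finset.univ.sup fun p : Fin n × Fin n =>
    if p.1 < p.2 then (S p.1 p.2).sup (fun s => s.natAbs) else 0

/-- A rooted labeled plane tree with `n` nodes (labeled by `Fin n`, index `i` representing
the label `i+1`, so the node `1` is `(0 : Fin n)`), each node having exactly `m+1`
linearly ordered children; children that are not nodes are unlabeled leaves and carry no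
further data. `parent v` is the parent node of the node `v` (with the convention
`parent root = root`), and `pos v` is the position of `v` among the `m+1` children of its
parent, so `(pos v : ℕ)` is the number `lsib v` of left siblings of `v`. -/
structure PlaneTree (n m : ℕ) where
  root : Fin n
  parent : Fin n → Fin n
  pos : Fin n → Fin (m + 1)
  parent_root : parent root = root
  reaches_root : ∀ v : Fin n, ∃ k : ℕ, parent^[k] v = root
  pos_inj : ∀ v w : Fin n, v ≠ root → w ≠ root → parent v = parent w → pos v = pos w → v = w

namespace PlaneTree

variable {n m : ℕ}

/-- `v` is a child of `u` (among the nodes). -/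
def IsChild (T : PlaneTree n m) (v u : Fin n) : Prop :=
  v ≠ T.root ∧ T.parent v = u

/-- `v` is the cadet of `u`: the rightmost child of `u` that is a node. -/
def IsCadet (T : PlaneTree n m) (u v : Fin n) : Prop :=
  T.IsChild v u ∧ ∀ w : Fin n, T.IsChild w u → T.pos w ≤ T.pos v

/-- The number of left siblings of `v`. -/
def lsib (T : PlaneTree n m) (v : Fin n) : ℕ := (T.pos v : ℕ)

end PlaneTree

/-- `(v a, v (a+1), …, v b)` is a cadet sequence of `T` (1-indexed, `1 ≤ a ≤ b`). -/
def IsCadetWindow {n m : ℕ} (T : PlaneTree n m) (v : ℕ → Fin n) (a b : ℕ) : Prop :=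
  1 ≤ a ∧ a ≤ b ∧ ∀ p : ℕ, a < p → p ≤ b → T.IsCadet (v (p - 1)) (v p)

/-- `v` is injective on the indices `a, …, b`. -/
def WindowInj {n : ℕ} (v : ℕ → Fin n) (a b : ℕ) : Prop :=
  ∀ p q : ℕ, a ≤ p → p ≤ b → a ≤ q → q ≤ b → v p = v q → p = q

/-- `(v a, …, v b)` is an `S`-cadet sequence of `T`. -/
def IsSCadetWindow {n m : ℕ} (S : Fin n → Fin n → Finset ℤ) (T : PlaneTree n m)
    (v : ℕ → Fin n) (a b : ℕ) : Prop :=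
  IsCadetWindow T v a b ∧
    ∀ i j : ℕ, a ≤ i → i < j → j ≤ b →
      (∑ p ∈ Finset.Icc (i + 1) j, T.lsib (v p)) ∉ Sminus S (v i) (v j)

/-- `(v 1, …, v k)` is a maximal cadet sequence of `T`: all children of `v k` are
leaves, and no node has `v 1` as its cadet. -/
def IsMaxCadetSeq {n m : ℕ} (T : PlaneTree n m) (k : ℕ) (v : ℕ → Fin n) : Prop :=
  IsCadetWindow T v 1 k ∧ (∀ w : Fin n, ¬ T.IsChild w (v k)) ∧ ∀ u : Fin n, ¬ T.IsCadet u (v 1)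

/-- `(v a, …, v b)` is a maximal `S`-cadet sequence inside the ambient cadet sequence
`(v 1, …, v k)`. -/
def IsMaxSCadetWindow {n m : ℕ} (S : Fin n → Fin n → Finset ℤ) (T : PlaneTree n m)
    (k : ℕ) (v : ℕ → Fin n) (a b : ℕ) : Prop :=
  b ≤ k ∧ IsSCadetWindow S T v a b ∧
    (a = 1 ∨ ¬ IsSCadetWindow S T v (a - 1) b) ∧
    (b = k ∨ ¬ IsSCadetWindow S T v a (b + 1))

/-- `Y` is (the set of nodes of) a maximal `S`-cadet sequence of `T`. -/
def IsMaxSCadetSet {n m : ℕ} (S : Fin n → Fin n → Finset ℤ) (T : PlaneTree n m)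
    (Y : Finset (Fin n)) : Prop :=
  ∃ (k : ℕ) (v : ℕ → Fin n) (a b : ℕ), IsMaxCadetSeq T k v ∧ WindowInj v 1 k ∧
    IsMaxSCadetWindow S T k v a b ∧ Y = (Finset.Icc a b).image v

/-- `Y` is (the set of nodes of) a nonempty cadet sequence of `T`. -/
def IsCadetSeqSet {n m : ℕ} (T : PlaneTree n m) (Y : Finset (Fin n)) : Prop :=
  ∃ (k : ℕ) (v : ℕ → Fin n), IsCadetWindow T v 1 k ∧ WindowInj v 1 k ∧
    Y = (Finset.Icc 1 k).image v

/-- `X` is (the set of nodes of) an `S`-connected cadet sequence of `T`: it is a cadet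
sequence, every maximal `S`-cadet sequence is disjoint from it or contained in it, and no
cadet sequence with this property is properly contained in it. -/
def SConnected {n m : ℕ} (S : Fin n → Fin n → Finset ℤ) (T : PlaneTree n m)
    (X : Finset (Fin n)) : Prop :=
  IsCadetSeqSet T X ∧
    (∀ Y, IsMaxSCadetSet S T Y → X ∩ Y = ∅ ∨ Y ⊆ X) ∧
    ∀ X', IsCadetSeqSet T X' → (∀ Y, IsMaxSCadetSet S T Y → X' ∩ Y = ∅ ∨ Y ⊆ X') →
      X' ⊆ X → X' = X

/-- `Y` is (the set of nodes of) an `S`-cadet sequence of `T` (a possible box). -/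
def IsSBox {n m : ℕ} (S : Fin n → Fin n → Finset ℤ) (T : PlaneTree n m)
    (Y : Finset (Fin n)) : Prop :=
  ∃ (k : ℕ) (v : ℕ → Fin n), IsSCadetWindow S T v 1 k ∧ WindowInj v 1 k ∧
    Y = (Finset.Icc 1 k).image v

/-- `B` is an `S`-boxing of the set of nodes `X`: a partition of `X` into
`S`-cadet sequences. -/
def IsSBoxingOf {n m : ℕ} (S : Fin n → Fin n → Finset ℤ) (T : PlaneTree n m)
    (X : Finset (Fin n)) (B : Finset (Finset (Fin n))) : Prop :=
  (∀ Y ∈ B, IsSBox S T Y ∧ Y ⊆ X) ∧ ∀ u ∈ X, ∃! Y, Y ∈ B ∧ u ∈ Y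

/-- The contribution `r_S(X)` of a cadet sequence with (injective) node set `X`
(whose length is `X.card`): `∑_{B ∈ U_S(X)} (-1)^(|X| - |B|)`. -/
noncomputable def contrib {n m : ℕ} (S : Fin n → Fin n → Finset ℤ) (T : PlaneTree n m)
    (X : Finset (Fin n)) : ℤ :=
  ∑ B : Finset (Finset (Fin n)),
    if IsSBoxingOf S T X B then (-1 : ℤ) ^ (X.card - B.card) else 0

/-- The contribution `r_S(T) = ∑_{B ∈ U_S(T)} (-1)^(n - |B|)` of the tree `T`. -/
noncomputable def treeContrib {n m : ℕ} (S : Fin n → Fin n → Finset ℤ)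
    (T : PlaneTree n m) : ℤ :=
  contrib S T Finset.univ

/-- The tuple `S` is transitive. -/
def TransitiveS {n : ℕ} (S : Fin n → Fin n → Finset ℤ) : Prop :=
  ∀ i j k : Fin n, i ≠ j → j ≠ k → i ≠ k →
    ∀ s t : ℕ, s ∉ Sminus S i j → t ∉ Sminus S j k → s + t ∉ Sminus S i k

/-- The arrangement `A_S` is almost transitive (`(i : ℕ) = 0` encodes "`i` is the node `1`"). -/
def AlmostTransitive {n : ℕ} (S : Fin n → Fin n → Finset ℤ) : Prop :=
  ∀ i j k : Fin n, i ≠ j → j ≠ k → i ≠ k → (i : ℕ) ≠ 0 → (k : ℕ) ≠ 0 →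
    ∀ s t : ℕ, s ∉ Sminus S i j → t ∉ Sminus S j k → s + t ∉ Sminus S i k

/-- `A_S` is an Ish-type arrangement: `0 ∈ Sᵢⱼ` for all `i < j`, and `Sᵢⱼ = {0}`
whenever `1 < i < j`. -/
def IshType {n : ℕ} (S : Fin n → Fin n → Finset ℤ) : Prop :=
  (∀ i j : Fin n, i < j → (0 : ℤ) ∈ S i j) ∧
    ∀ i j : Fin n, 0 < (i : ℕ) → i < j → S i j = {0}

/-- `A_S` is a nested Ish arrangement. -/
def NestedIsh {n : ℕ} (S : Fin n → Fin n → Finset ℤ) : Prop :=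
  IshType S ∧ ∀ i j k : Fin n, (i : ℕ) = 0 → 0 < (j : ℕ) → j < k → S i j ⊆ S i k

/-- The lower inefficiency `E_l(T)`: the number of lower inefficient nodes of `T`,
i.e. nodes `w` that are left siblings of the node `1` with `lsib w ∉ S⁻_{w,1}`. -/
noncomputable def Elow {n m : ℕ} [NeZero n] (S : Fin n → Fin n → Finset ℤ)
    (T : PlaneTree n m) : ℕ :=
  (Finset.univ.filter fun w : Fin n =>
    w ≠ T.root ∧ (0 : Fin n) ≠ T.root ∧ T.parent w = T.parent 0 ∧ T.pos w < T.pos 0 ∧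
      T.lsib w ∉ Sminus S w 0).card

/-- The upper inefficiency `E_u(T)`: the number of upper inefficient nodes of `T`,
i.e. nodes `w` with parent the node `1` that are not the cadet of `1`, with
`lsib w ∉ S⁻_{1,w}`. -/
noncomputable def Eup {n m : ℕ} [NeZero n] (S : Fin n → Fin n → Finset ℤ)
    (T : PlaneTree n m) : ℕ :=
  (Finset.univ.filter fun w : Fin n =>
    T.IsChild w 0 ∧ ¬ T.IsCadet 0 w ∧ T.lsib w ∉ Sminus S 0 w).card

/-- The class `S(e_l, ℓ_l, e_u, ℓ_u)` of trees in `T^(m)(n)` with nonzero contribution,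
lower/upper inefficiencies `e_l, e_u` and lower/upper 1-lengths `ℓ_l, ℓ_u` (the latter
expressed via the maximal `S`-cadet sequence `{v_{j-ℓ_l}, …, v_j, …, v_{j+ℓ_u}}`
around the node `1 = v j` inside its maximal cadet sequence `(v 1, …, v t)`). -/
def ClassS {n : ℕ} [NeZero n] (S : Fin n → Fin n → Finset ℤ) (el ll eu lu : ℕ) :
    Set (PlaneTree n (mOf S)) :=
  {T | treeContrib S T ≠ 0 ∧ Elow S T = el ∧ Eup S T = eu ∧
    ∃ (t : ℕ) (v : ℕ → Fin n) (j : ℕ), IsMaxCadetSeq T t v ∧ WindowInj v 1 t ∧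
      1 ≤ j ∧ j ≤ t ∧ v j = 0 ∧ ll < j ∧ j + lu ≤ t ∧
      IsMaxSCadetWindow S T t v (j - ll) (j + lu)}

/-- The complement in `ℝ^n` of the union of the hyperplanes `xᵢ - xⱼ = s`
(`i < j`, `s ∈ S i j`) of the arrangement `A_S`. -/
def complementSet {n : ℕ} (S : Fin n → Fin n → Finset ℤ) : Set (Fin n → ℝ) :=
  {x | ∀ i j : Fin n, i < j → ∀ s ∈ S i j, x i - x j ≠ (s : ℝ)}

/-- The number of regions `r_S` of the arrangement `A_S`: the number of connected
components of the complement of its hyperplanes. -/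
noncomputable def numRegions {n : ℕ} (S : Fin n → Fin n → Finset ℤ) : ℕ :=
  Nat.card (ConnectedComponents ↥(complementSet S))

/-- A rooted labeled plane tree with `n` nodes and arbitrary numbers of children:
`nchild u` is the total number of (linearly ordered) children of the node `u`, and
`pos v` the position of the node `v` among the children of its parent (so
`lsib v = pos v` and `rsib v = nchild (parent v) - 1 - pos v`). Children not occupied
by nodes are unlabeled leaves. -/
structure LPTree (n : ℕ) where
  root : Fin n
  parent : Fin n → Fin n
  pos : Fin n → ℕ
  nchild : Fin n → ℕ
  parent_root : parent root = root
  reaches_root : ∀ v : Fin n, ∃ k : ℕ, parent^[k] v = root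
  pos_lt : ∀ v : Fin n, v ≠ root → pos v < nchild (parent v)
  pos_inj : ∀ v w : Fin n, v ≠ root → w ≠ root → parent v = parent w → pos v = pos w → v = w

/-- Membership in the set `𝔗(S)`: the root is the node `1`, the node `1` has `2m+2`
children, every other node has exactly one child, and every node `k ≠ 1` satisfies
`lsib k ∈ S⁻₁ₖ` or `rsib k ∈ S⁻ₖ₁`. -/
def IsFrakT {n : ℕ} [NeZero n] (S : Fin n → Fin n → Finset ℤ) (T : LPTree n) : Prop :=
  T.root = 0 ∧ T.nchild 0 = 2 * mOf S + 2 ∧ (∀ v : Fin n, v ≠ 0 → T.nchild v = 1) ∧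
    ∀ v : Fin n, v ≠ 0 →
      (T.pos v ∈ Sminus S 0 v ∨ (T.nchild (T.parent v) - 1 - T.pos v) ∈ Sminus S v 0)

/-- For an `S`-connected cadet sequence `(v 1, …, v k)` whose maximal `S`-cadet
sequences are the windows `[a r, b r]` (`1 ≤ r ≤ k'`, in increasing order of last index),
`LastIdx a b k' j` is the index of the largest-indexed node of `X_j \ X_{j+1}`
(with `X_{k'+1} = {0}` containing no node of the sequence). -/
def LastIdx (a b : ℕ → ℕ) (k' j : ℕ) : ℕ :=
  ((Finset.Icc (a j) (b j)) \
    (if j = k' then (∅ : Finset ℕ) else Finset.Icc (a (j + 1)) (b (j + 1)))).sup id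

/-- `X_i` reaches `X_j`: the parent of the largest-indexed node of `X_j \ X_{j+1}`
belongs to `X_i`, with the conventions `X_0 = {0}`, `parent (v 1) = 0`
(the index `0` plays the role of `X_0`). -/
def Reaches (a b : ℕ → ℕ) (k' i j : ℕ) : Prop :=
  i < j ∧ j ≤ k' ∧
    ((i = 0 ∧ LastIdx a b k' j = 1) ∨
      (1 ≤ i ∧ 2 ≤ LastIdx a b k' j ∧ a i ≤ LastIdx a b k' j - 1 ∧
        LastIdx a b k' j - 1 ≤ b i))

/-- A successful run of the algorithm: `idx 0 = 0`; at each step, the next term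
`idx (j+1)` is the smallest-indexed maximal `S`-cadet sequence reached by `X_{idx j}`
but not reached by any `X_{idx l}` with `l < j`; the run terminates at `k'`
after `t` steps. -/
def AlgRun (a b : ℕ → ℕ) (k' t : ℕ) (idx : ℕ → ℕ) : Prop :=
  idx 0 = 0 ∧ idx t = k' ∧ (∀ j, j < t → idx j ≠ k') ∧
    ∀ j, j < t →
      Reaches a b k' (idx j) (idx (j + 1)) ∧
        (∀ l, l < j → ¬ Reaches a b k' (idx l) (idx (j + 1))) ∧
        ∀ r, r < idx (j + 1) → Reaches a b k' (idx j) r → ∃ l, l < j ∧ Reaches a b k' (idx l) r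

/-- Condition (2) of Proposition 4.5 (with lower 1-length `i` and upper 1-length `k`),
for the maximal cadet sequence `(v 1, …, v t)` containing the node `1 = v j`. -/
def Cond9 {n m : ℕ} (S : Fin n → Fin n → Finset ℤ) (T : PlaneTree n m)
    (t : ℕ) (v : ℕ → Fin n) (j i k : ℕ) : Prop :=
  i < j ∧ k ≤ t - j ∧
    (∀ s : ℕ, 1 ≤ s → s ≤ t → (s < j - i - 1 ∨ j + k + 1 < s) →
      IsMaxSCadetWindow S T t v s s) ∧
    IsMaxSCadetWindow S T t v (j - i) (j + k) ∧
    (j - i ≠ 1 → IsMaxSCadetWindow S T t v (j - i - 1) (j - 1)) ∧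
    (j - i = 1 → i = 0) ∧
    (j + k ≠ t → IsMaxSCadetWindow S T t v (j + 1) (j + k + 1)) ∧
    (j + k = t → k = 0) ∧
    ∀ a' b' : ℕ, IsMaxSCadetWindow S T t v a' b' →
      ((a' = b' ∧ (a' < j - i - 1 ∨ j + k + 1 < a')) ∨ (a' = j - i ∧ b' = j + k) ∨
        (j - i ≠ 1 ∧ a' = j - i - 1 ∧ b' = j - 1) ∨ (j + k ≠ t ∧ a' = j + 1 ∧ b' = j + k + 1))

section Generic
open Finset

/-- flip a strict-inequality iff using distinctness -/
lemma st14_flip {a b c d : ℝ} (h : b < a ↔ d < c) (hab : a ≠ b) (hcd : c ≠ d) :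
    a < b ↔ c < d := by
  constructor
  · intro h1
    rcases hcd.lt_or_gt with h2 | h2
    · exact h2
    · exact absurd (h.mpr h2) (asymm h1)
  · intro h1
    rcases hab.lt_or_gt with h2 | h2
    · exact h2
    · exact absurd (h.mp h2) (asymm h1)

lemma st14_rank_aux {ι : Type} [Fintype ι] (u v : ι → ℝ)
    (ho : ∀ i j, u i < u j ↔ v i < v j) (p q : ℝ)
    (hc : (univ.filter fun i => v i < q).card ≤ (univ.filter fun i => u i < p).card)
    {i : ι} (hi : v i < q) : u i < p := by
  by_contra hip
  push_neg at hip
  have h1 : insert i (univ.filter fun j => v j < v i) ⊆ univ.filter fun j => v j < q := by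
    intro j hj
    rcases Finset.mem_insert.mp hj with rfl | hj
    · exact Finset.mem_filter.mpr ⟨Finset.mem_univ _, hi⟩
    · exact Finset.mem_filter.mpr ⟨Finset.mem_univ _, lt_trans (Finset.mem_filter.mp hj).2 hi⟩
  have h2 : (univ.filter fun j => v j < v i).card = (univ.filter fun j => u j < u i).card := by
    congr 1
    apply Finset.filter_congr
    intro j _
    simp [ho]
  have h3 : (univ.filter fun j => u j < p) ⊆ univ.filter fun j => u j < u i := by
    intro j hj
    exact Finset.mem_filter.mpr ⟨Finset.mem_univ _, lt_of_lt_of_le (Finset.mem_filter.mp hj).2 hip⟩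
  have h4 : i ∉ univ.filter fun j => v j < v i := by simp
  have := Finset.card_le_card h1
  rw [Finset.card_insert_of_notMem h4] at this
  have h5 := Finset.card_le_card h3
  omega

/-- sign constancy of a nonvanishing continuous function on a preconnected set -/
lemma st14_sign_const {X : Type*} [TopologicalSpace X] {C : Set X} (hC : IsPreconnected C)
    (g : X → ℝ) (hg : Continuous g) (h0 : ∀ z ∈ C, g z ≠ 0) {x y : X}
    (hx : x ∈ C) (hy : y ∈ C) : (g x < 0 ↔ g y < 0) := by
  have him : IsPreconnected (g '' C) := hC.image g hg.continuousOn
  have hoc := him.ordConnected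
  have key : ∀ a b : X, a ∈ C → b ∈ C → g a < 0 → g b < 0 := by
    intro a b ha hb hga
    by_contra hgb
    push_neg at hgb
    have h0' : (0 : ℝ) ∈ Set.Icc (g a) (g b) := ⟨le_of_lt hga, hgb⟩
    have := hoc.out (Set.mem_image_of_mem g ha) (Set.mem_image_of_mem g hb) h0'
    rcases this with ⟨z, hz, hz0⟩
    exact h0 z hz hz0
  exact ⟨key x y hx hy, key y x hy hx⟩

/-- existence of a point with a prescribed number of elements of `F` below it -/
lemma st14_exists_rank : ∀ (r : ℕ) (F : Finset ℝ), r ≤ F.card →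
    ∃ p, p ∉ F ∧ (F.filter (· < p)).card = r := by
  intro r
  induction r with
  | zero =>
    intro F _
    rcases F.eq_empty_or_nonempty with rfl | hne
    · exact ⟨0, by simp⟩
    · refine ⟨F.min' hne - 1, ?_, ?_⟩
      · intro hmem
        have := F.min'_le _ hmem
        linarith
      · rw [Finset.card_eq_zero, Finset.filter_eq_empty_iff]
        intro a ha
        have := F.min'_le a ha
        push_neg
        linarith
  | succ r ih =>
    intro F hr
    obtain ⟨p, hpF, hpc⟩ := ih F (by omega)
    set G := F.filter (p < ·) with hG
    have hsplit : ∀ a ∈ F, a < p ∨ p < a := by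
      intro a ha
      rcases lt_trichotomy a p with h | h | h
      · exact Or.inl h
      · exact absurd (h ▸ ha) hpF
      · exact Or.inr h
    have hFcard : (F.filter (· < p)).card + G.card = F.card := by
      have heq : G = F.filter (fun a => ¬ a < p) := by
        rw [hG]
        apply Finset.filter_congr
        intro a ha
        constructor
        · exact fun h => asymm h
        · intro h
          rcases hsplit a ha with h' | h'
          · exact absurd h' h
          · exact h'
      rw [heq]
      exact Finset.card_filter_add_card_filter_not (p := (· < p))
    have hGne : G.Nonempty := by
      rw [← Finset.card_pos]; omega
    set a := G.min' hGne with ha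
    have haG : a ∈ G := G.min'_mem hGne
    have hpa : p < a := (Finset.mem_filter.mp haG).2
    have haF : a ∈ F := (Finset.mem_filter.mp haG).1
    set G' := G.erase a with hG'
    -- choose p' : strictly above a, strictly below everything in G'
    obtain ⟨p', hap', hp'G'⟩ :
        ∃ p', a < p' ∧ ∀ c ∈ G', p' < c := by
      rcases G'.eq_empty_or_nonempty with hGe | hGne'
      · exact ⟨a + 1, by linarith, by simp [hGe]⟩
      · refine ⟨(a + G'.min' hGne') / 2, ?_, ?_⟩
        · have : a < G'.min' hGne' := by
            have hmem := G'.min'_mem hGne'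
            have h1 : G'.min' hGne' ∈ G := Finset.mem_of_mem_erase hmem
            have h2 : G'.min' hGne' ≠ a := Finset.ne_of_mem_erase hmem
            have := G.min'_le _ h1
            rw [← ha] at this
            exact lt_of_le_of_ne this (Ne.symm h2)
          linarith
        · intro c hc
          have h1 : a < G'.min' hGne' := by
            have h1 : G'.min' hGne' ∈ G := Finset.mem_of_mem_erase (G'.min'_mem hGne')
            have h2 : G'.min' hGne' ≠ a := Finset.ne_of_mem_erase (G'.min'_mem hGne')
            have := G.min'_le _ h1
            rw [← ha] at this
            exact lt_of_le_of_ne this (Ne.symm h2)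
          have := G'.min'_le c hc
          linarith
    have hkey : ∀ c ∈ F, (c < p' ↔ (c < p ∨ c = a)) := by
      intro c hc
      constructor
      · intro hcp'
        rcases hsplit c hc with h | h
        · exact Or.inl h
        · -- c ∈ G
          have hcG : c ∈ G := Finset.mem_filter.mpr ⟨hc, h⟩
          by_cases hca : c = a
          · exact Or.inr hca
          · have : c ∈ G' := Finset.mem_erase.mpr ⟨hca, hcG⟩
            exact absurd hcp' (asymm (hp'G' c this))
      · intro h
        rcases h with h | rfl
        · linarith
        · exact hap'
    refine ⟨p', ?_, ?_⟩
    · intro hmem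
      rcases hsplit p' hmem with h | h
      · have := (hkey p' hmem).mpr (Or.inl h)
        exact lt_irrefl _ this
      · have hcG : p' ∈ G := Finset.mem_filter.mpr ⟨hmem, h⟩
        by_cases hca : p' = a
        · exact absurd hca.symm (ne_of_lt hap')
        · have : p' ∈ G' := Finset.mem_erase.mpr ⟨hca, hcG⟩
          exact lt_irrefl _ (hp'G' p' this)
    · have : F.filter (· < p') = insert a (F.filter (· < p)) := by
        ext c
        simp only [Finset.mem_filter, Finset.mem_insert]
        constructor
        · rintro ⟨hc, hcp'⟩
          rcases (hkey c hc).mp hcp' with h | h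
          · exact Or.inr ⟨hc, h⟩
          · exact Or.inl h
        · rintro (rfl | ⟨hc, hcp⟩)
          · exact ⟨haF, hap'⟩
          · exact ⟨hc, (hkey c hc).mpr (Or.inl hcp)⟩
      rw [this, Finset.card_insert_of_notMem (by simp [asymm hpa]), hpc]

end Generic

noncomputable section

namespace St14
open Finset

variable {n : ℕ} [NeZero n] (S : Fin n → Fin n → Finset ℤ)

def IshTypeL : Prop :=
  (∀ i j : Fin n, i < j → (0 : ℤ) ∈ S i j) ∧
    ∀ i j : Fin n, 0 < (i : ℕ) → i < j → S i j = {0}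

def NestedIshL : Prop :=
  IshTypeL S ∧ ∀ i j k : Fin n, (i : ℕ) = 0 → 0 < (j : ℕ) → j < k → S i j ⊆ S i k

def cSet : Set (Fin n → ℝ) :=
  {x | ∀ i j : Fin n, i < j → ∀ s ∈ S i j, x i - x j ≠ (s : ℝ)}

/-- index type for the "forbidden values" relevant to coordinate `k` -/
def Idx (k : Fin n) : Type := ↥(Finset.Ioi k) ⊕ ↥(S 0 k)

instance (k : Fin n) : Fintype (Idx S k) := by unfold Idx; infer_instance

/-- the family of forbidden values for coordinate `k` -/
def fam (x : Fin n → ℝ) (k : Fin n) : Idx S k → ℝ :=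
  Sum.elim (fun j => x j.1) (fun s => x 0 - (s.1 : ℝ))

/-- the factor `n + 1 + |S 0 k| - (k+1)` -/
def cFac (k : Fin n) : ℕ := n + 1 + (S 0 k).card - ((k : ℕ) + 1)

/-- rank of `x k` among the forbidden values -/
def psi (x : Fin n → ℝ) (k : Fin n) : ℕ :=
  (univ.filter fun i : Idx S k => fam S x k i < x k).card

lemma card_Idx (k : Fin n) : Fintype.card (Idx S k) = (n - 1 - (k : ℕ)) + (S 0 k).card := by
  unfold Idx
  rw [Fintype.card_sum, Fintype.card_coe, Fintype.card_coe, Fin.card_Ioi]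

lemma psi_lt (x : Fin n → ℝ) (k : Fin n) : psi S x k < cFac S k := by
  have h1 : psi S x k ≤ Fintype.card (Idx S k) := by
    unfold psi
    calc (univ.filter fun i : Idx S k => fam S x k i < x k).card
        ≤ (univ : Finset (Idx S k)).card := Finset.card_filter_le _ _
      _ = Fintype.card (Idx S k) := Finset.card_univ
  rw [card_Idx] at h1
  have hk : (k : ℕ) < n := k.isLt
  unfold cFac
  omega

variable {S}

lemma val_pos_of_ne {k : Fin n} (hk : k ≠ 0) : (0 : ℕ) < (k : ℕ) := by
  have : (k : ℕ) ≠ 0 := by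
    intro h
    exact hk (Fin.ext (by simp [h, Fin.val_zero]))
  omega

lemma zero_lt_of_ne {k : Fin n} (hk : k ≠ 0) : (0 : Fin n) < k := by
  rw [Fin.lt_def, Fin.val_zero]
  exact val_pos_of_ne hk

/-- forbidden values are distinct from `x k` on the complement -/
lemma fam_ne (hS : NestedIshL S) {x : Fin n → ℝ} (hx : x ∈ cSet S) {k : Fin n} (hk : k ≠ 0)
    (i : Idx S k) : fam S x k i ≠ x k := by
  cases i with
  | inl j =>
    have hkj : k < j.1 := Finset.mem_Ioi.mp j.2
    have h0 : (0 : ℤ) ∈ S k j.1 := hS.1.1 k j.1 hkj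
    have := hx k j.1 hkj 0 h0
    simp only [Int.cast_zero] at this
    intro h
    exact this (by rw [fam] at h; simp only [Sum.elim_inl] at h; linarith)
  | inr s =>
    have h0k : (0 : Fin n) < k := zero_lt_of_ne hk
    have := hx 0 k h0k s.1 s.2
    intro h
    rw [fam] at h
    simp only [Sum.elim_inr] at h
    exact this (by linarith)

/-- forbidden values are pairwise distinct on the complement -/
lemma fam_inj (hS : NestedIshL S) {x : Fin n → ℝ} (hx : x ∈ cSet S) {k : Fin n} (hk : k ≠ 0) :
    Function.Injective (fam S x k) := by
  have haux : ∀ (j : ↥(Finset.Ioi k)) (s : ↥(S 0 k)), x j.1 ≠ x 0 - (s.1 : ℝ) := by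
    intro j s
    have hkj : k < j.1 := Finset.mem_Ioi.mp j.2
    have h0k : (0 : ℕ) < (k : ℕ) := val_pos_of_ne hk
    have hmem : s.1 ∈ S 0 j.1 := hS.2 0 k j.1 (Fin.val_zero n) h0k hkj s.2
    have := hx 0 j.1 (lt_trans (zero_lt_of_ne hk) hkj) s.1 hmem
    intro h
    exact this (by linarith)
  intro i i' h
  cases i with
  | inl j =>
    cases i' with
    | inl j' =>
      by_contra hne
      have hjj' : j.1 ≠ j'.1 := fun hh => hne (congrArg Sum.inl (Subtype.ext hh))
      simp only [fam, Sum.elim_inl] at h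
      rcases hjj'.lt_or_gt with hlt | hlt
      · have h0 : (0 : ℤ) ∈ S j.1 j'.1 := hS.1.1 _ _ hlt
        have := hx j.1 j'.1 hlt 0 h0
        simp only [Int.cast_zero] at this
        exact this (by linarith)
      · have h0 : (0 : ℤ) ∈ S j'.1 j.1 := hS.1.1 _ _ hlt
        have := hx j'.1 j.1 hlt 0 h0
        simp only [Int.cast_zero] at this
        exact this (by linarith)
    | inr s =>
      simp only [fam, Sum.elim_inl, Sum.elim_inr] at h
      exact absurd h (haux j s)
  | inr s =>
    cases i' with
    | inl j =>
      simp only [fam, Sum.elim_inl, Sum.elim_inr] at h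
      exact absurd h.symm (haux j s)
    | inr s' =>
      simp only [fam, Sum.elim_inr, sub_right_inj, Int.cast_inj] at h
      exact congrArg Sum.inr (Subtype.ext h)


/-- key downward induction: equal rank vectors force equal comparison signs -/
lemma key_signs (hS : NestedIshL S) {x y : Fin n → ℝ} (hx : x ∈ cSet S) (hy : y ∈ cSet S)
    (h : ∀ k : Fin n, k ≠ 0 → psi S x k = psi S y k) :
    ∀ k : Fin n, k ≠ 0 → ∀ i : Idx S k, (fam S x k i < x k ↔ fam S y k i < y k) := by
  suffices H : ∀ d : ℕ, ∀ k : Fin n, n - (k : ℕ) ≤ d → k ≠ 0 →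
      ∀ i : Idx S k, (fam S x k i < x k ↔ fam S y k i < y k) by
    intro k hk i
    exact H n k (by omega) hk i
  intro d
  induction d with
  | zero => intro k hkd; have := k.isLt; omega
  | succ d ih =>
    intro k hkd hk i
    -- comparison agreement within the forbidden family
    have hne : ∀ (j : ↥(Finset.Ioi k)), j.1 ≠ 0 := by
      intro j
      have := Finset.mem_Ioi.mp j.2
      intro hh
      rw [hh] at this
      exact absurd (zero_lt_of_ne hk) (asymm this)
    have hd : ∀ (j : ↥(Finset.Ioi k)), n - (j.1 : ℕ) ≤ d := by
      intro j
      have h1 := Finset.mem_Ioi.mp j.2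
      rw [Fin.lt_def] at h1
      have := val_pos_of_ne hk
      omega
    have hnested : ∀ (j : ↥(Finset.Ioi k)) (s : ↥(S 0 k)), s.1 ∈ S 0 j.1 := by
      intro j s
      exact hS.2 0 k j.1 (Fin.val_zero n) (val_pos_of_ne hk) (Finset.mem_Ioi.mp j.2) s.2
    have ho : ∀ i i' : Idx S k,
        (fam S x k i < fam S x k i' ↔ fam S y k i < fam S y k i') := by
      intro i i'
      by_cases hii' : i = i'
      · subst hii'; simp
      cases i with
      | inl j =>
        cases i' with
        | inl j' =>
          have hjj' : j.1 ≠ j'.1 := by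
            intro hh; exact hii' (congrArg Sum.inl (Subtype.ext hh))
          simp only [fam, Sum.elim_inl]
          rcases hjj'.lt_or_gt with hlt | hlt
          · -- j < j' : use ih at j with index inl j'
            have hmem : j'.1 ∈ Finset.Ioi j.1 := Finset.mem_Ioi.mpr hlt
            have h1 := ih j.1 (hd j) (hne j) (Sum.inl ⟨j'.1, hmem⟩)
            simp only [fam, Sum.elim_inl] at h1
            refine st14_flip h1 ?_ ?_
            · exact fun hh => (fam_inj hS hx hk (by simp only [fam, Sum.elim_inl]; exact hh))
                |> fun hh2 => hii' hh2
            · exact fun hh => (fam_inj hS hy hk (by simp only [fam, Sum.elim_inl]; exact hh))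
                |> fun hh2 => hii' hh2
          · -- j' < j : use ih at j' with index inl j
            have hmem : j.1 ∈ Finset.Ioi j'.1 := Finset.mem_Ioi.mpr hlt
            have h1 := ih j'.1 (hd j') (hne j') (Sum.inl ⟨j.1, hmem⟩)
            simp only [fam, Sum.elim_inl] at h1
            exact h1
        | inr s =>
          -- want x j < x 0 - s ↔ ...
          simp only [fam, Sum.elim_inl, Sum.elim_inr]
          have h1 := ih j.1 (hd j) (hne j) (Sum.inr ⟨s.1, hnested j s⟩)
          simp only [fam, Sum.elim_inr] at h1
          refine st14_flip h1 ?_ ?_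
          · exact fun hh => hii' (fam_inj hS hx hk
              (by simp only [fam, Sum.elim_inl, Sum.elim_inr]; exact hh))
          · exact fun hh => hii' (fam_inj hS hy hk
              (by simp only [fam, Sum.elim_inl, Sum.elim_inr]; exact hh))
      | inr s =>
        cases i' with
        | inl j =>
          simp only [fam, Sum.elim_inl, Sum.elim_inr]
          have h1 := ih j.1 (hd j) (hne j) (Sum.inr ⟨s.1, hnested j s⟩)
          simp only [fam, Sum.elim_inr] at h1
          exact h1
        | inr s' =>
          simp only [fam, Sum.elim_inr, sub_lt_sub_iff_left, Int.cast_lt]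
    have hcard := h k hk
    unfold psi at hcard
    constructor
    · intro h1
      exact st14_rank_aux (fam S y k) (fam S x k) (fun a b => (ho a b).symm) (y k) (x k)
        (le_of_eq hcard) h1
    · intro h1
      exact st14_rank_aux (fam S x k) (fam S y k) ho (x k) (y k) (ge_of_eq hcard) h1


/-- hyperplane signs agree when rank vectors agree -/
lemma hyper_signs (hS : NestedIshL S) {x y : Fin n → ℝ} (hx : x ∈ cSet S) (hy : y ∈ cSet S)
    (h : ∀ k : Fin n, k ≠ 0 → psi S x k = psi S y k) :
    ∀ i j : Fin n, i < j → ∀ s ∈ S i j,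
      ((x i - x j - (s : ℝ) < 0) ↔ (y i - y j - (s : ℝ) < 0)) := by
  have key := key_signs hS hx hy h
  intro i j hij s hs
  by_cases hi0 : (i : ℕ) = 0
  · have hi : i = 0 := Fin.ext (by simp [hi0, Fin.val_zero])
    subst hi
    have hj0 : j ≠ 0 := by
      intro hh; rw [hh] at hij; exact absurd hij (lt_irrefl _)
    have h1 := key j hj0 (Sum.inr ⟨s, hs⟩)
    simp only [fam, Sum.elim_inr] at h1
    constructor
    · intro h2
      have : x 0 - (s : ℝ) < x j := by linarith
      have := h1.mp this
      linarith
    · intro h2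
      have : y 0 - (s : ℝ) < y j := by linarith
      have := h1.mpr this
      linarith
  · have hs0 : s = 0 := by
      have := hS.1.2 i j (by omega) hij
      rw [this] at hs
      exact Finset.mem_singleton.mp hs
    subst hs0
    have hi : i ≠ 0 := by
      intro hh; rw [hh, Fin.val_zero] at hi0; exact hi0 rfl
    have h1 := key i hi (Sum.inl ⟨j, Finset.mem_Ioi.mpr hij⟩)
    simp only [fam, Sum.elim_inl] at h1
    have hxne : x j ≠ x i := fam_ne hS hx hi (Sum.inl ⟨j, Finset.mem_Ioi.mpr hij⟩)
    have hyne : y j ≠ y i := fam_ne hS hy hi (Sum.inl ⟨j, Finset.mem_Ioi.mpr hij⟩)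
    have h2 : (x i < x j ↔ y i < y j) := st14_flip h1 (Ne.symm hxne) (Ne.symm hyne)
    push_cast
    constructor
    · intro h3; have := h2.mp (by linarith); linarith
    · intro h3; have := h2.mpr (by linarith); linarith

/-- hyperplane values are nonzero on the complement -/
lemma hyper_ne {x : Fin n → ℝ} (hx : x ∈ cSet S) {i j : Fin n} (hij : i < j) {s : ℤ}
    (hs : s ∈ S i j) : x i - x j - (s : ℝ) ≠ 0 := by
  have := hx i j hij s hs
  intro h
  exact this (by linarith)

/-- equal rank vectors put two points of the complement in the same component -/
lemma same_component (hS : NestedIshL S) (x y : ↥(cSet S))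
    (h : ∀ k : Fin n, k ≠ 0 → psi S x.1 k = psi S y.1 k) :
    connectedComponent x = connectedComponent y := by
  have hsg := hyper_signs hS x.2 y.2 h
  -- the segment from x to y lies in the complement
  set seg : Set (Fin n → ℝ) :=
    (fun t : ℝ => fun a => (1 - t) * x.1 a + t * y.1 a) '' Set.Icc 0 1 with hseg
  have hsub : seg ⊆ cSet S := by
    rintro z ⟨t, ht, rfl⟩
    intro i j hij s hs
    have ha := hyper_ne x.2 hij hs
    have hb := hyper_ne y.2 hij hs
    have hab := hsg i j hij s hs
    set a := x.1 i - x.1 j - (s : ℝ) with hha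
    set b := y.1 i - y.1 j - (s : ℝ) with hhb
    intro hcon
    have hz : (1 - t) * a + t * b = 0 := by
      rw [hha, hhb]; ring_nf; ring_nf at hcon; linarith
    rcases ht with ⟨ht0, ht1⟩
    rcases lt_trichotomy a 0 with hc | hc | hc
    · have hbneg : b < 0 := hab.mp hc
      have e1 : (1 - t) * a ≤ 0 := mul_nonpos_of_nonneg_of_nonpos (by linarith) (le_of_lt hc)
      have e2 : t * b ≤ 0 := mul_nonpos_of_nonneg_of_nonpos ht0 (le_of_lt hbneg)
      have e3 : (1 - t) * a = 0 := by linarith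
      have e4 : t * b = 0 := by linarith
      rcases mul_eq_zero.mp e3 with h' | h'
      · have ht : t = 1 := by linarith
        rw [ht, one_mul] at e4
        exact hb e4
      · exact ha h'
    · exact ha hc
    · have hbpos : 0 < b := by
        rcases lt_trichotomy b 0 with h' | h' | h'
        · exact absurd (hab.mpr h') (asymm hc)
        · exact absurd h' hb
        · exact h'
      have e1 : 0 ≤ (1 - t) * a := mul_nonneg (by linarith) (le_of_lt hc)
      have e2 : 0 ≤ t * b := mul_nonneg ht0 (le_of_lt hbpos)
      have e3 : (1 - t) * a = 0 := by linarith
      have e4 : t * b = 0 := by linarith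
      rcases mul_eq_zero.mp e3 with h' | h'
      · have ht : t = 1 := by linarith
        rw [ht, one_mul] at e4
        exact hb e4
      · exact ha h'
  have hcont : Continuous (fun t : ℝ => fun a => (1 - t) * x.1 a + t * y.1 a) := by
    apply continuous_pi
    intro a
    continuity
  have hpre : IsPreconnected seg :=
    (isPreconnected_Icc).image _ hcont.continuousOn
  have hxmem : x.1 ∈ seg := ⟨0, by norm_num⟩
  have hymem : y.1 ∈ seg := ⟨1, by norm_num⟩
  -- transfer to the subtype
  set seg' : Set ↥(cSet S) := Subtype.val ⁻¹' seg with hseg'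
  have him : Subtype.val '' seg' = seg := by
    rw [hseg', Subtype.image_preimage_coe, Set.inter_eq_right.mpr hsub]
  have hpre' : IsPreconnected seg' := by
    rw [← Topology.IsInducing.subtypeVal.isPreconnected_image (s := seg'), him]
    exact hpre
  have hx' : x ∈ seg' := hxmem
  have hy' : y ∈ seg' := hymem
  have h1 : seg' ⊆ connectedComponent x := hpre'.subset_connectedComponent hx'
  exact connectedComponent_eq (h1 hy')

/-- the rank vector is constant on connected components -/
lemma psi_const (hS : NestedIshL S) (x y : ↥(cSet S))
    (h : connectedComponent x = connectedComponent y) :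
    ∀ k : Fin n, k ≠ 0 → psi S x.1 k = psi S y.1 k := by
  intro k hk
  unfold psi
  congr 1
  apply Finset.filter_congr
  intro i _
  set g : ↥(cSet S) → ℝ := fun z => fam S z.1 k i - z.1 k with hg
  have hgc : Continuous g := by
    rw [hg]
    cases i with
    | inl j =>
      simp only [fam, Sum.elim_inl]
      exact ((continuous_apply j.1).comp continuous_subtype_val).sub
        ((continuous_apply k).comp continuous_subtype_val)
    | inr s =>
      simp only [fam, Sum.elim_inr]
      exact (((continuous_apply (0 : Fin n)).comp continuous_subtype_val).sub
        continuous_const).sub ((continuous_apply k).comp continuous_subtype_val)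
  have h0 : ∀ z ∈ connectedComponent x, g z ≠ 0 := by
    intro z _
    have := fam_ne hS z.2 hk i
    rw [hg]
    intro hzero
    exact this (sub_eq_zero.mp hzero)
  have hxc : x ∈ connectedComponent x := mem_connectedComponent
  have hyc : y ∈ connectedComponent x := by
    rw [h]; exact mem_connectedComponent
  have := st14_sign_const isPreconnected_connectedComponent g hgc h0 hxc hyc
  rw [hg] at this
  simp only [sub_lt_iff_lt_add, zero_add] at this
  exact this


variable (S)

/-- choose a point with `r` elements of `F` below it -/
def pick (F : Finset ℝ) (r : ℕ) : ℝ :=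
  if h : ∃ p, p ∉ F ∧ (F.filter (· < p)).card = r then h.choose else 0

lemma pick_spec {F : Finset ℝ} {r : ℕ} (h : r ≤ F.card) :
    pick F r ∉ F ∧ (F.filter (· < pick F r)).card = r := by
  have hex := st14_exists_rank r F h
  rw [pick, dif_pos hex]
  exact hex.choose_spec

/-- recursive construction of a point with prescribed rank vector -/
def bld (r : Fin n → ℕ) (k : Fin n) : ℝ :=
  if k = 0 then 0 else
    pick (((Finset.Ioi k).attach.image fun j => bld r j.1) ∪
      ((S 0 k).image fun s : ℤ => (0 : ℝ) - s)) (r k)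
termination_by n - (k : ℕ)
decreasing_by
  have h1 : k < j.1 := Finset.mem_Ioi.mp j.2
  rw [Fin.lt_def] at h1
  have h2 : (k : ℕ) < n := k.isLt
  have h3 : (j.1 : ℕ) < n := j.1.isLt
  omega

/-- the forbidden set at stage `k` -/
def bldF (r : Fin n → ℕ) (k : Fin n) : Finset ℝ :=
  ((Finset.Ioi k).attach.image fun j => bld S r j.1) ∪
    ((S 0 k).image fun s : ℤ => (0 : ℝ) - s)

lemma bld_zero (r : Fin n → ℕ) : bld S r 0 = 0 := by
  rw [bld]
  simp

lemma bld_eq (r : Fin n → ℕ) {k : Fin n} (hk : k ≠ 0) :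
    bld S r k = pick (bldF S r k) (r k) := by
  rw [bld, if_neg hk]
  rfl

variable {S}

lemma bld_spec (hS : NestedIshL S) (r : Fin n → ℕ) (hr : ∀ k : Fin n, k ≠ 0 → r k < cFac S k) :
    ∀ k : Fin n, k ≠ 0 → bld S r k ∉ bldF S r k ∧
      (bldF S r k).card = (n - 1 - (k : ℕ)) + (S 0 k).card ∧
      ((bldF S r k).filter (· < bld S r k)).card = r k := by
  suffices H : ∀ d : ℕ, ∀ k : Fin n, n - (k : ℕ) ≤ d → k ≠ 0 → bld S r k ∉ bldF S r k ∧
      (bldF S r k).card = (n - 1 - (k : ℕ)) + (S 0 k).card ∧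
      ((bldF S r k).filter (· < bld S r k)).card = r k by
    intro k hk
    exact H n k (by omega) hk
  intro d
  induction d with
  | zero => intro k hkd; have := k.isLt; omega
  | succ d ih =>
    intro k hkd hk
    have hne : ∀ (j : ↥(Finset.Ioi k)), j.1 ≠ 0 := by
      intro j hh
      have := Finset.mem_Ioi.mp j.2
      rw [hh] at this
      exact absurd (zero_lt_of_ne hk) (asymm this)
    have hd : ∀ (j : ↥(Finset.Ioi k)), n - (j.1 : ℕ) ≤ d := by
      intro j
      have h1 := Finset.mem_Ioi.mp j.2
      rw [Fin.lt_def] at h1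
      have := val_pos_of_ne hk
      omega
    -- distinctness of already-constructed values
    have hdist : ∀ (j j' : ↥(Finset.Ioi k)), j.1 ≠ j'.1 → bld S r j.1 ≠ bld S r j'.1 := by
      intro j j' hjj'
      have hwlog : ∀ (a b : ↥(Finset.Ioi k)), a.1 < b.1 → bld S r a.1 ≠ bld S r b.1 := by
        intro a b hab heq
        have h1 := (ih a.1 (hd a) (hne a)).1
        apply h1
        rw [bldF]
        apply Finset.mem_union_left
        rw [heq]
        exact Finset.mem_image.mpr ⟨⟨b.1, Finset.mem_Ioi.mpr hab⟩,
          Finset.mem_attach _ _, rfl⟩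
      rcases hjj'.lt_or_gt with h | h
      · exact hwlog j j' h
      · exact fun heq => hwlog j' j h heq.symm
    -- constructed values avoid the shifted points
    have havoid : ∀ (j : ↥(Finset.Ioi k)) (s : ℤ), s ∈ S 0 k →
        bld S r j.1 ≠ (0 : ℝ) - s := by
      intro j s hs heq
      have h1 := (ih j.1 (hd j) (hne j)).1
      apply h1
      rw [bldF]
      apply Finset.mem_union_right
      have hmem : s ∈ S 0 j.1 :=
        hS.2 0 k j.1 (Fin.val_zero n) (val_pos_of_ne hk) (Finset.mem_Ioi.mp j.2) hs
      rw [heq]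
      exact Finset.mem_image.mpr ⟨s, hmem, rfl⟩
    -- cardinality of the forbidden set
    have hcardL : (((Finset.Ioi k).attach.image fun j => bld S r j.1)).card
        = n - 1 - (k : ℕ) := by
      rw [Finset.card_image_of_injective _ ?_, Finset.card_attach, Fin.card_Ioi]
      intro a b hab
      by_contra hab'
      exact hdist a b (fun hh => hab' (Subtype.ext hh)) hab
    have hcardR : (((S 0 k)).image fun s : ℤ => (0 : ℝ) - s).card = (S 0 k).card := by
      apply Finset.card_image_of_injective
      intro a b hab
      have hab' : (0 : ℝ) - (a : ℝ) = (0 : ℝ) - (b : ℝ) := hab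
      have : (a : ℝ) = b := by linarith
      exact_mod_cast this
    have hdisj : Disjoint ((Finset.Ioi k).attach.image fun j => bld S r j.1)
        ((S 0 k).image fun s : ℤ => (0 : ℝ) - s) := by
      rw [Finset.disjoint_left]
      intro z hz1 hz2
      obtain ⟨j, _, rfl⟩ := Finset.mem_image.mp hz1
      obtain ⟨s, hs, heq⟩ := Finset.mem_image.mp hz2
      exact havoid j s hs heq.symm
    have hcard : (bldF S r k).card = (n - 1 - (k : ℕ)) + (S 0 k).card := by
      rw [bldF, Finset.card_union_of_disjoint hdisj, hcardL, hcardR]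
    have hrle : r k ≤ (bldF S r k).card := by
      have := hr k hk
      rw [cFac] at this
      have hkn : (k : ℕ) < n := k.isLt
      have := val_pos_of_ne hk
      omega
    have hp := pick_spec (F := bldF S r k) (r := r k) hrle
    rw [← bld_eq S r hk] at hp
    exact ⟨hp.1, hcard, hp.2⟩

lemma bld_mem (hS : NestedIshL S) (r : Fin n → ℕ) (hr : ∀ k : Fin n, k ≠ 0 → r k < cFac S k) :
    bld S r ∈ cSet S := by
  intro i j hij s hs
  by_cases hi0 : (i : ℕ) = 0
  · have hi : i = 0 := Fin.ext (by simp [hi0, Fin.val_zero])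
    subst hi
    have hj : j ≠ 0 := by
      intro hh; rw [hh] at hij; exact absurd hij (lt_irrefl _)
    have h1 := (bld_spec hS r hr j hj).1
    intro heq
    apply h1
    rw [bldF]
    apply Finset.mem_union_right
    rw [bld_zero] at heq
    have : bld S r j = (0 : ℝ) - s := by linarith
    rw [this]
    exact Finset.mem_image.mpr ⟨s, hs, rfl⟩
  · have hs0 : s = 0 := by
      have := hS.1.2 i j (by omega) hij
      rw [this] at hs
      exact Finset.mem_singleton.mp hs
    subst hs0
    have hi : i ≠ 0 := by
      intro hh; rw [hh, Fin.val_zero] at hi0; exact hi0 rfl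
    have h1 := (bld_spec hS r hr i hi).1
    intro heq
    apply h1
    rw [bldF]
    apply Finset.mem_union_left
    have : bld S r i = bld S r j := by push_cast at heq; linarith
    rw [this]
    exact Finset.mem_image.mpr ⟨⟨j, Finset.mem_Ioi.mpr hij⟩, Finset.mem_attach _ _, rfl⟩

lemma psi_bld (hS : NestedIshL S) (r : Fin n → ℕ) (hr : ∀ k : Fin n, k ≠ 0 → r k < cFac S k)
    {k : Fin n} (hk : k ≠ 0) : psi S (bld S r) k = r k := by
  have hmem := bld_mem hS r hr
  have hinj := fam_inj hS hmem hk
  have himg : (univ.image (fam S (bld S r) k)) = bldF S r k := by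
    ext z
    constructor
    · intro hz
      obtain ⟨i, _, rfl⟩ := Finset.mem_image.mp hz
      cases i with
      | inl j =>
        rw [bldF]
        apply Finset.mem_union_left
        exact Finset.mem_image.mpr ⟨j, Finset.mem_attach _ _, rfl⟩
      | inr s =>
        rw [bldF]
        apply Finset.mem_union_right
        refine Finset.mem_image.mpr ⟨s.1, s.2, ?_⟩
        simp [fam, bld_zero]
    · intro hz
      rw [bldF, Finset.mem_union] at hz
      rcases hz with hz | hz
      · obtain ⟨j, _, rfl⟩ := Finset.mem_image.mp hz
        exact Finset.mem_image.mpr ⟨Sum.inl j, Finset.mem_univ _, rfl⟩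
      · obtain ⟨s, hs, rfl⟩ := Finset.mem_image.mp hz
        refine Finset.mem_image.mpr ⟨Sum.inr ⟨s, hs⟩, Finset.mem_univ _, ?_⟩
        simp [fam, bld_zero]
  have hbridge : psi S (bld S r) k
      = (((univ.image (fam S (bld S r) k))).filter (· < bld S r k)).card := by
    rw [psi, Finset.filter_image, Finset.card_image_of_injective _ hinj]
  rw [hbridge, himg]
  exact (bld_spec hS r hr k hk).2.2

end St14

/-- Theorem 6.3: the number of regions of a nested Ish arrangement is
`r_S = ∏_{k=2}^n (n + 1 + |S_{1,k}| - k)` (the label `k` is the index `j : Fin n` with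
`(j : ℕ) + 1 = k`). -/
theorem statement_14 {n : ℕ} [NeZero n] (S : Fin n → Fin n → Finset ℤ) (hS : NestedIsh S) :
    numRegions S = ∏ j ∈ Finset.univ.filter (fun j : Fin n => j ≠ 0),
      (n + 1 + (S 0 j).card - ((j : ℕ) + 1)) := by
  classical
  have hS' : St14.NestedIshL S := hS
  have hcomp : complementSet S = St14.cSet S := rfl
  let D := ∀ k : {j : Fin n // j ≠ 0}, Fin (St14.cFac S k.1)
  let Φ : ↥(St14.cSet S) → D := fun x k => ⟨St14.psi S x.1 k.1, St14.psi_lt S x.1 k.1⟩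
  have hconst : ∀ (a b : ↥(St14.cSet S)),
      connectedComponent a = connectedComponent b → Φ a = Φ b := by
    intro a b hab
    have := St14.psi_const hS' a b hab
    funext k
    exact Fin.ext (this k.1 k.2)
  let G : ConnectedComponents ↥(St14.cSet S) → D := Quotient.lift Φ hconst
  have hGmk : ∀ x : ↥(St14.cSet S), G (ConnectedComponents.mk x) = Φ x := fun _ => rfl
  have hGbij : Function.Bijective G := by
    constructor
    · intro c1 c2 h
      obtain ⟨x, rfl⟩ := ConnectedComponents.surjective_coe c1
      obtain ⟨y, rfl⟩ := ConnectedComponents.surjective_coe c2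
      rw [hGmk, hGmk] at h
      apply ConnectedComponents.coe_eq_coe.mpr
      apply St14.same_component hS'
      intro k hk
      have := congrFun h ⟨k, hk⟩
      exact congrArg Fin.val this
    · intro dvec
      let rf : Fin n → ℕ := fun k => if h : k = 0 then 0 else (dvec ⟨k, h⟩ : ℕ)
      have hr : ∀ k : Fin n, k ≠ 0 → rf k < St14.cFac S k := by
        intro k hk
        show (if h : k = 0 then 0 else (dvec ⟨k, h⟩ : ℕ)) < St14.cFac S k
        rw [dif_neg hk]
        exact (dvec ⟨k, hk⟩).isLt
      refine ⟨ConnectedComponents.mk ⟨St14.bld S rf, St14.bld_mem hS' rf hr⟩, ?_⟩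
      rw [hGmk]
      funext k
      apply Fin.ext
      show St14.psi S (St14.bld S rf) k.1 = ((dvec k : Fin _) : ℕ)
      rw [St14.psi_bld hS' rf hr k.2]
      show (if h : k.1 = 0 then 0 else (dvec ⟨k.1, h⟩ : ℕ)) = _
      rw [dif_neg k.2]
  have h1 : numRegions S = Nat.card D := by
    rw [numRegions, hcomp]
    exact Nat.card_eq_of_bijective G hGbij
  rw [h1, Nat.card_eq_fintype_card]
  have h2 : Fintype.card D = ∏ k : {j : Fin n // j ≠ 0}, St14.cFac S k.1 := by
    rw [Fintype.card_pi]
    congr 1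
    funext k
    rw [Fintype.card_fin]
  rw [h2]
  rw [← Finset.prod_subtype (Finset.univ.filter (fun j : Fin n => j ≠ 0))
    (by intro x; simp) (fun j => St14.cFac S j)]
  rfl
end
end

section
/- Let A_S be the n-dimensional Ish arrangement, i.e. the hyperplane arrangement in ℝ^n consisting of the hyperplanes x_i − x_j = 0 for all 1 ≤ i < j ≤ n together with the hyperplanes x_1 − x_j = s for all 1 < j ≤ n and s ∈ {1, …, j−1}. Then the number of regions of A_S (connected components of the complement in ℝ^n of the union of its hyperplanes) equals the Cayley number (n+1)^(n−1). -/
open scoped Classical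

namespace Statement15

open Finset

/-! ### Positions relative to a finite set of cut points -/

noncomputable def posOf (t : ℝ) (K : Finset ℝ) : ℕ := (K.filter (fun c => c < t)).card

lemma posOf_le (t : ℝ) (K : Finset ℝ) : posOf t K ≤ K.card :=
  Finset.card_le_card (Finset.filter_subset _ _)

lemma filter_eq_of_posOf_eq {t t' : ℝ} {K : Finset ℝ} (h : posOf t K = posOf t' K) :
    K.filter (fun c => c < t) = K.filter (fun c => c < t') := by
  rcases le_total t t' with hle | hle
  · exact Finset.eq_of_subset_of_card_le
      (Finset.monotone_filter_right K (fun c _ hc => lt_of_lt_of_le hc hle)) h.ge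
  · exact (Finset.eq_of_subset_of_card_le
      (Finset.monotone_filter_right K (fun c _ hc => lt_of_lt_of_le hc hle)) h.le).symm

lemma lt_iff_of_posOf_eq {t t' : ℝ} {K : Finset ℝ} (h : posOf t K = posOf t' K) :
    ∀ c ∈ K, (c < t ↔ c < t') := by
  intro c hc
  have hf := filter_eq_of_posOf_eq h
  constructor
  · intro hlt
    have : c ∈ K.filter (fun c => c < t') := hf ▸ (Finset.mem_filter.2 ⟨hc, hlt⟩)
    exact (Finset.mem_filter.1 this).2
  · intro hlt
    have : c ∈ K.filter (fun c => c < t) := hf.symm ▸ (Finset.mem_filter.2 ⟨hc, hlt⟩)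
    exact (Finset.mem_filter.1 this).2

lemma exists_posOf (K : Finset ℝ) : ∀ k, k ≤ K.card → ∃ t, t ∉ K ∧ posOf t K = k := by
  intro k
  induction k with
  | zero =>
    intro _
    by_cases hK : K.Nonempty
    · refine ⟨K.min' hK - 1, fun hmem => ?_, ?_⟩
      · have := K.min'_le _ hmem; linarith
      · rw [posOf, Finset.card_eq_zero, Finset.filter_eq_empty_iff]
        intro c hc
        have := K.min'_le _ hc
        simp only [not_lt]
        linarith
    · rw [Finset.not_nonempty_iff_eq_empty] at hK
      subst hK
      exact ⟨0, by simp, by simp [posOf]⟩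
  | succ k ih =>
    intro hk
    obtain ⟨t, htK, hpos⟩ := ih (Nat.le_of_succ_le hk)
    have hBne : (K.filter (fun c => t < c)).Nonempty := by
      by_contra h
      rw [Finset.not_nonempty_iff_eq_empty, Finset.filter_eq_empty_iff] at h
      have hKfull : K.filter (fun c => c < t) = K := by
        apply Finset.filter_true_of_mem
        intro c hc
        rcases lt_trichotomy c t with h1 | h1 | h1
        · exact h1
        · exact absurd (h1 ▸ hc) htK
        · exact absurd h1 (h hc)
      rw [posOf, hKfull] at hpos
      omega
    set b := (K.filter (fun c => t < c)).min' hBne with hb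
    have hbK : b ∈ K := (Finset.mem_filter.1 ((K.filter (fun c => t < c)).min'_mem hBne)).1
    have htb : t < b := (Finset.mem_filter.1 ((K.filter (fun c => t < c)).min'_mem hBne)).2
    obtain ⟨t', hbt', ht'lt⟩ : ∃ t' : ℝ, b < t' ∧ ∀ c ∈ K, b < c → t' < c := by
      by_cases hCCne : (K.filter (fun c => b < c)).Nonempty
      · set CC := K.filter (fun c => b < c) with hCC
        have h2 : b < CC.min' hCCne := (Finset.mem_filter.1 (CC.min'_mem hCCne)).2
        refine ⟨(b + CC.min' hCCne) / 2, by linarith, ?_⟩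
        intro c hc hbc
        have h1 : CC.min' hCCne ≤ c := CC.min'_le _ (Finset.mem_filter.2 ⟨hc, hbc⟩)
        linarith
      · refine ⟨b + 1, by linarith, ?_⟩
        intro c hc hbc
        exact absurd ⟨c, Finset.mem_filter.2 ⟨hc, hbc⟩⟩ hCCne
    have hkey : K.filter (fun c => c < t') = insert b (K.filter (fun c => c < t)) := by
      ext c
      simp only [Finset.mem_filter, Finset.mem_insert]
      constructor
      · rintro ⟨hc, hct'⟩
        rcases lt_trichotomy c t with h1 | h1 | h1
        · exact Or.inr ⟨hc, h1⟩
        · exact absurd (h1 ▸ hc) htK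
        · -- t < c, so c ∈ B, so b ≤ c; if b < c then t' < c contradiction
          rcases eq_or_lt_of_le (Finset.min'_le _ c (Finset.mem_filter.2 ⟨hc, h1⟩) : b ≤ c)
            with h2 | h2
          · exact Or.inl h2.symm
          · exact absurd hct' (not_lt.2 (le_of_lt (ht'lt c hc h2)))
      · rintro (rfl | ⟨hc, hct⟩)
        · exact ⟨hbK, hbt'⟩
        · exact ⟨hc, by linarith⟩
    refine ⟨t', fun ht'K => ?_, ?_⟩
    · -- t' ∈ K impossible: b < t' would give t' < t'
      exact absurd (ht'lt t' ht'K hbt') (lt_irrefl _)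
    · rw [posOf, hkey, Finset.card_insert_of_notMem (by
        simp only [Finset.mem_filter, not_and]
        intro _
        exact not_lt.2 (le_of_lt htb))]
      show posOf t K + 1 = k + 1
      rw [hpos]

noncomputable def pick (K : Finset ℝ) (k : ℕ) : ℝ :=
  if h : k ≤ K.card then (exists_posOf K k h).choose else 0

lemma pick_not_mem {K : Finset ℝ} {k : ℕ} (h : k ≤ K.card) : pick K k ∉ K := by
  rw [pick, dif_pos h]; exact (exists_posOf K k h).choose_spec.1

lemma posOf_pick {K : Finset ℝ} {k : ℕ} (h : k ≤ K.card) : posOf (pick K k) K = k := by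
  rw [pick, dif_pos h]; exact (exists_posOf K k h).choose_spec.2

end Statement15

/-! ### Cut sets -/

namespace Statement15
open Finset

noncomputable def intCuts (i : ℕ) : Finset ℝ := (Finset.Icc (0:ℤ) (i:ℤ)).image (Int.cast : ℤ → ℝ)

lemma mem_intCuts {c : ℝ} {i : ℕ} :
    c ∈ intCuts i ↔ ∃ s : ℤ, 0 ≤ s ∧ s ≤ (i:ℤ) ∧ (s:ℝ) = c := by
  simp [intCuts, Finset.mem_image, Finset.mem_Icc, and_assoc]

lemma card_intCuts (i : ℕ) : (intCuts i).card = i + 1 := by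
  have h := Finset.card_image_of_injOn
    (s := Finset.Icc (0:ℤ) (i:ℤ)) (f := (Int.cast : ℤ → ℝ))
    (fun a _ b _ h => Int.cast_injective h)
  rw [intCuts, h, Int.card_Icc]
  omega

noncomputable def cuts (n : ℕ) (u : ℕ → ℝ) (i : ℕ) : Finset ℝ :=
  intCuts i ∪ (Finset.Ioo i n).image u

lemma card_cuts_le {n : ℕ} (u : ℕ → ℝ) {i : ℕ} (h : i < n) : (cuts n u i).card ≤ n := by
  refine le_trans (Finset.card_union_le _ _) ?_
  have h1 := card_intCuts i
  have h2 : ((Finset.Ioo i n).image u).card ≤ n - i - 1 := by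
    refine le_trans (Finset.card_image_le) ?_
    rw [Nat.card_Ioo]
  omega

/-- The goodness hypotheses for the labels in `(i, n)` only. -/
def GoodAbove (n : ℕ) (u : ℕ → ℝ) (i : ℕ) : Prop :=
  ∀ j, i < j → j < n →
    (∀ s : ℤ, 0 ≤ s → s ≤ (j:ℤ) → (s:ℝ) ≠ u j) ∧ (∀ j', j < j' → j' < n → u j ≠ u j')

def Good (n : ℕ) (u : ℕ → ℝ) : Prop := GoodAbove n u 0

lemma Good.goodAbove {n : ℕ} {u : ℕ → ℝ} (h : Good n u) (i : ℕ) : GoodAbove n u i :=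
  fun j hj hjn => h j (Nat.lt_of_le_of_lt (Nat.zero_le i) hj) hjn

lemma injOn_of_goodAbove {n : ℕ} {u : ℕ → ℝ} {i : ℕ} (h : GoodAbove n u i) :
    Set.InjOn u (Finset.Ioo i n) := by
  intro a ha b hb hab
  simp only [Finset.coe_Ioo, Set.mem_Ioo] at ha hb
  by_contra hne
  rcases Nat.lt_or_ge a b with hlt | hge
  · exact (h a ha.1 ha.2).2 b hlt hb.2 hab
  · have hlt : b < a := by omega
    exact (h b hb.1 hb.2).2 a hlt ha.2 hab.symm

lemma disj_of_goodAbove {n : ℕ} {u : ℕ → ℝ} {i : ℕ} (h : GoodAbove n u i) :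
    Disjoint (intCuts i) ((Finset.Ioo i n).image u) := by
  rw [Finset.disjoint_left]
  intro c hc hc'
  obtain ⟨s, hs0, hsi, rfl⟩ := mem_intCuts.1 hc
  obtain ⟨j, hj, hju⟩ := Finset.mem_image.1 hc'
  rw [Finset.mem_Ioo] at hj
  have hsj : s ≤ (j:ℤ) := le_trans hsi (by exact_mod_cast Nat.le_of_lt hj.1)
  exact (h j hj.1 hj.2).1 s hs0 hsj hju.symm

lemma card_cuts {n : ℕ} {u : ℕ → ℝ} {i : ℕ} (h : GoodAbove n u i) (hin : i < n) :
    (cuts n u i).card = n := by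
  rw [cuts, Finset.card_union_of_disjoint (disj_of_goodAbove h), card_intCuts,
    Finset.card_image_of_injOn (injOn_of_goodAbove h), Nat.card_Ioo]
  omega

lemma not_mem_cuts {n : ℕ} {u : ℕ → ℝ} {i : ℕ} {t : ℝ} :
    t ∉ cuts n u i ↔ (∀ s : ℤ, 0 ≤ s → s ≤ (i:ℤ) → (s:ℝ) ≠ t) ∧
      (∀ j, i < j → j < n → u j ≠ t) := by
  rw [cuts, Finset.mem_union]
  push_neg
  constructor
  · rintro ⟨h1, h2⟩
    refine ⟨fun s hs0 hsi hst => h1 (mem_intCuts.2 ⟨s, hs0, hsi, hst⟩), fun j hij hjn hjt => ?_⟩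
    exact h2 (Finset.mem_image.2 ⟨j, Finset.mem_Ioo.2 ⟨hij, hjn⟩, hjt⟩)
  · rintro ⟨h1, h2⟩
    constructor
    · intro hmem
      obtain ⟨s, hs0, hsi, hst⟩ := mem_intCuts.1 hmem
      exact h1 s hs0 hsi hst
    · intro hmem
      obtain ⟨j, hj, hjt⟩ := Finset.mem_image.1 hmem
      rw [Finset.mem_Ioo] at hj
      exact h2 j hj.1 hj.2 hjt

lemma mem_cuts_int {n : ℕ} {u : ℕ → ℝ} {i : ℕ} {s : ℤ} (hs0 : 0 ≤ s) (hsi : s ≤ (i:ℤ)) :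
    (s:ℝ) ∈ cuts n u i :=
  Finset.mem_union_left _ (mem_intCuts.2 ⟨s, hs0, hsi, rfl⟩)

lemma mem_cuts_val {n : ℕ} {u : ℕ → ℝ} {i j : ℕ} (hij : i < j) (hjn : j < n) :
    u j ∈ cuts n u i :=
  Finset.mem_union_right _ (Finset.mem_image.2 ⟨j, Finset.mem_Ioo.2 ⟨hij, hjn⟩, rfl⟩)

lemma cuts_congr {n : ℕ} {u u' : ℕ → ℝ} {i : ℕ}
    (h : ∀ j, i < j → j < n → u j = u' j) : cuts n u i = cuts n u' i := by
  unfold cuts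
  congr 1
  apply Finset.image_congr
  intro j hj
  rw [Finset.coe_Ioo, Set.mem_Ioo] at hj
  exact h j hj.1 hj.2

/-! ### The decoding map -/

noncomputable def Yaux (n : ℕ) (g : ℕ → ℕ) : ℕ → ℕ → ℝ
  | 0 => fun _ => 0
  | (k+1) => fun i =>
      if i = n - (k+1) then pick (cuts n (Yaux n g k) i) (g i) else Yaux n g k i

noncomputable def Y (n : ℕ) (g : ℕ → ℕ) : ℕ → ℝ := Yaux n g n

lemma Yaux_stable {n : ℕ} (g : ℕ → ℕ) {k k' : ℕ} (hkk' : k ≤ k') (hk' : k' ≤ n) :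
    ∀ i, n - k ≤ i → Yaux n g k' i = Yaux n g k i := by
  induction k' with
  | zero => intro i _; rw [Nat.le_zero.1 hkk']
  | succ m ih =>
    intro i hi
    rcases Nat.eq_or_lt_of_le hkk' with rfl | hlt
    · rfl
    · have hm : k ≤ m := by omega
      show (if i = n - (m+1) then pick (cuts n (Yaux n g m) i) (g i) else Yaux n g m i)
        = Yaux n g k i
      rw [if_neg (by omega : ¬ i = n - (m+1))]
      exact ih hm (by omega) i hi

lemma Y_eq_Yaux {n : ℕ} (g : ℕ → ℕ) {k : ℕ} (hk : k ≤ n) :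
    ∀ i, n - k ≤ i → Y n g i = Yaux n g k i := fun i hi =>
  Yaux_stable g hk (le_refl n) i hi

lemma Y_spec {n : ℕ} (g : ℕ → ℕ) {i : ℕ} (h2 : i < n) :
    Y n g i = pick (cuts n (Y n g) i) (g i) := by
  have h0 : Y n g i = Yaux n g (n - i) i := Y_eq_Yaux g (Nat.sub_le n i) i (by omega)
  have hk : n - i = (n - i - 1) + 1 := by omega
  rw [h0, hk]
  show (if i = n - (n - i - 1 + 1) then pick (cuts n (Yaux n g (n - i - 1)) i) (g i)
      else Yaux n g (n - i - 1) i) = _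
  rw [if_pos (by omega : i = n - (n - i - 1 + 1))]
  congr 1
  apply cuts_congr
  intro j hj hjn
  exact (Y_eq_Yaux g (k := n - i - 1) (by omega) j (by omega)).symm

lemma Y_congr {n : ℕ} {g g' : ℕ → ℕ} (h : ∀ i, 1 ≤ i → i < n → g i = g' i) :
    ∀ i, 1 ≤ i → i < n → Y n g i = Y n g' i := by
  suffices H : ∀ k, k ≤ n → ∀ i, 1 ≤ i → i < n → n - k ≤ i → Yaux n g k i = Yaux n g' k i by
    intro i h1 h2
    exact H n (le_refl n) i h1 h2 (by omega)
  intro k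
  induction k with
  | zero => intro _ i _ _ _; rfl
  | succ m ih =>
    intro hm i h1 h2 hi
    show (if i = n - (m+1) then pick (cuts n (Yaux n g m) i) (g i) else Yaux n g m i)
      = (if i = n - (m+1) then pick (cuts n (Yaux n g' m) i) (g' i) else Yaux n g' m i)
    by_cases hcase : i = n - (m+1)
    · rw [if_pos hcase, if_pos hcase, h i h1 h2]
      congr 1
      apply cuts_congr
      intro j hj hjn
      exact ih (by omega) j (by omega) hjn (by omega)
    · rw [if_neg hcase, if_neg hcase]
      exact ih (by omega) i h1 h2 (by omega)

lemma Y_good {n : ℕ} {g : ℕ → ℕ} (hg : ∀ i, i < n → g i ≤ n) : Good n (Y n g) := by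
  suffices H : ∀ d i, n ≤ i + d → 1 ≤ i → i < n →
      (∀ s : ℤ, 0 ≤ s → s ≤ (i:ℤ) → (s:ℝ) ≠ Y n g i) ∧
      (∀ j', i < j' → j' < n → Y n g i ≠ Y n g j') by
    intro j hj hjn
    exact H n j (by omega) (by omega) hjn
  intro d
  induction d with
  | zero => intro i hi h1 h2; exact absurd h2 (by omega)
  | succ d ih =>
    intro i hi h1 h2
    have hGA : GoodAbove n (Y n g) i := by
      intro j hj hjn
      exact ih j (by omega) (by omega) hjn
    have hcard : (cuts n (Y n g) i).card = n := card_cuts hGA h2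
    have hle : g i ≤ (cuts n (Y n g) i).card := by rw [hcard]; exact hg i h2
    have hnm : Y n g i ∉ cuts n (Y n g) i := by
      rw [Y_spec g h2]
      exact pick_not_mem hle
    rw [not_mem_cuts] at hnm
    exact ⟨hnm.1, fun j' hj' hj'n heq => hnm.2 j' hj' hj'n heq.symm⟩

lemma Y_posOf {n : ℕ} {g : ℕ → ℕ} (hg : ∀ i, i < n → g i ≤ n) {i : ℕ}
    (h1 : 1 ≤ i) (h2 : i < n) : posOf (Y n g i) (cuts n (Y n g) i) = g i := by
  have hGA : GoodAbove n (Y n g) i := (Y_good hg).goodAbove i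
  have hcard : (cuts n (Y n g) i).card = n := card_cuts hGA h2
  rw [Y_spec g h2]
  have : cuts n (Y n g) i = cuts n (Y n g) i := rfl
  exact posOf_pick (by rw [hcard]; exact hg i h2)

lemma good_not_mem_cuts {n : ℕ} {u : ℕ → ℝ} (hG : Good n u) {i : ℕ}
    (h1 : 1 ≤ i) (h2 : i < n) : u i ∉ cuts n u i := by
  rw [not_mem_cuts]
  refine ⟨(hG i (by omega) h2).1, fun j hj hjn heq => ?_⟩
  exact (hG i (by omega) h2).2 j hj hjn heq.symm

end Statement15

/-! ### Transport of positions along equivalent configurations -/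

namespace Statement15
open Finset

lemma lt_flip {a b a' b' : ℝ} (hne : a ≠ b) (hne' : a' ≠ b') (h : a < b ↔ a' < b') :
    b < a ↔ b' < a' := by
  constructor
  · intro hba
    rcases lt_trichotomy a' b' with h' | h' | h'
    · exact absurd (h.2 h') (lt_asymm hba)
    · exact absurd h' hne'
    · exact h'
  · intro hba
    rcases lt_trichotomy a b with h' | h' | h'
    · exact absurd (h.1 h') (lt_asymm hba)
    · exact absurd h' hne
    · exact h'

section Transport

variable {n : ℕ} {u w : ℕ → ℝ} {i : ℕ} {t t' : ℝ}

lemma transport_aux (hGu : Good n u) (hGw : Good n w) (h2 : i < n)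
    (hpos : posOf t (cuts n u i) = posOf t' (cuts n w i))
    (a : ℝ) (haK : a ∈ cuts n u i) (hat : a < t)
    (hbi : ∀ s : ℤ, 0 ≤ s → s ≤ (i:ℤ) → (s:ℝ) < t' → ((s:ℝ) < t ∧ (s:ℝ) ≠ a))
    (hbv : ∀ j, i < j → j < n → w j < t' → (u j < t ∧ u j ≠ a)) : False := by
  classical
  set ψ : ℝ → ℝ := fun c => if h : ∃ j, j ∈ Finset.Ioo i n ∧ w j = c then u h.choose else c
    with hψdef
  have hmaps : ∀ c ∈ (cuts n w i).filter (fun c => c < t'),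
      ψ c ∈ (((cuts n u i).filter (fun c => c < t)).erase a) := by
    intro c hc
    rw [Finset.mem_filter] at hc
    obtain ⟨hcK, hct'⟩ := hc
    rw [cuts, Finset.mem_union] at hcK
    rcases hcK with hcI | hcV
    · obtain ⟨s, hs0, hsi, rfl⟩ := mem_intCuts.1 hcI
      have hnex : ¬ ∃ j, j ∈ Finset.Ioo i n ∧ w j = (s:ℝ) := by
        rintro ⟨j, hj, hjw⟩
        rw [Finset.mem_Ioo] at hj
        exact (hGw j (Nat.lt_of_le_of_lt (Nat.zero_le i) hj.1) hj.2).1 s hs0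
          (le_trans hsi (by exact_mod_cast Nat.le_of_lt hj.1)) hjw.symm
      have hψc : ψ (s:ℝ) = (s:ℝ) := dif_neg hnex
      obtain ⟨hlt, hne⟩ := hbi s hs0 hsi hct'
      rw [hψc]
      exact Finset.mem_erase.2 ⟨hne, Finset.mem_filter.2 ⟨mem_cuts_int hs0 hsi, hlt⟩⟩
    · obtain ⟨j, hj, hjw⟩ := Finset.mem_image.1 hcV
      have hex : ∃ j, j ∈ Finset.Ioo i n ∧ w j = c := ⟨j, hj, hjw⟩
      have hψc : ψ c = u hex.choose := dif_pos hex
      obtain ⟨hj0I, hj0w⟩ := hex.choose_spec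
      rw [Finset.mem_Ioo] at hj0I
      have hb := hbv hex.choose hj0I.1 hj0I.2 (by rw [hj0w]; exact hct')
      rw [hψc]
      exact Finset.mem_erase.2 ⟨hb.2, Finset.mem_filter.2
        ⟨mem_cuts_val hj0I.1 hj0I.2, hb.1⟩⟩
  have hinj : Set.InjOn ψ ((cuts n w i).filter (fun c => c < t') : Finset ℝ) := by
    intro c1 hc1 c2 hc2 heq
    simp only [Finset.coe_filter, Set.mem_setOf_eq] at hc1 hc2
    have hintc : ∀ c : ℝ, c ∈ cuts n w i → (¬ ∃ j, j ∈ Finset.Ioo i n ∧ w j = c) →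
        ∃ s : ℤ, 0 ≤ s ∧ s ≤ (i:ℤ) ∧ (s:ℝ) = c := by
      intro c hcK hnex
      rw [cuts, Finset.mem_union] at hcK
      rcases hcK with hcI | hcV
      · exact mem_intCuts.1 hcI
      · obtain ⟨j, hj, hjw⟩ := Finset.mem_image.1 hcV
        exact absurd ⟨j, hj, hjw⟩ hnex
    by_cases hx1 : ∃ j, j ∈ Finset.Ioo i n ∧ w j = c1
      <;> by_cases hx2 : ∃ j, j ∈ Finset.Ioo i n ∧ w j = c2
    · rw [show ψ c1 = u hx1.choose from dif_pos hx1,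
        show ψ c2 = u hx2.choose from dif_pos hx2] at heq
      obtain ⟨hI1, hw1⟩ := hx1.choose_spec
      obtain ⟨hI2, hw2⟩ := hx2.choose_spec
      have := injOn_of_goodAbove (hGu.goodAbove i) (by exact_mod_cast hI1)
        (by exact_mod_cast hI2) heq
      rw [← hw1, ← hw2, this]
    · rw [show ψ c1 = u hx1.choose from dif_pos hx1,
        show ψ c2 = c2 from dif_neg hx2] at heq
      obtain ⟨s, hs0, hsi, hsc⟩ := hintc c2 hc2.1 hx2
      obtain ⟨hI1, hw1⟩ := hx1.choose_spec
      rw [Finset.mem_Ioo] at hI1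
      exact absurd (by rw [hsc, ← heq] : (s:ℝ) = u hx1.choose)
        ((hGu hx1.choose (Nat.lt_of_le_of_lt (Nat.zero_le i) hI1.1) hI1.2).1 s hs0
          (le_trans hsi (by exact_mod_cast Nat.le_of_lt hI1.1)))
    · rw [show ψ c1 = c1 from dif_neg hx1,
        show ψ c2 = u hx2.choose from dif_pos hx2] at heq
      obtain ⟨s, hs0, hsi, hsc⟩ := hintc c1 hc1.1 hx1
      obtain ⟨hI2, hw2⟩ := hx2.choose_spec
      rw [Finset.mem_Ioo] at hI2
      exact absurd (by rw [hsc, heq] : (s:ℝ) = u hx2.choose)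
        ((hGu hx2.choose (Nat.lt_of_le_of_lt (Nat.zero_le i) hI2.1) hI2.2).1 s hs0
          (le_trans hsi (by exact_mod_cast Nat.le_of_lt hI2.1)))
    · rw [show ψ c1 = c1 from dif_neg hx1, show ψ c2 = c2 from dif_neg hx2] at heq
      exact heq
  have hle := Finset.card_le_card_of_injOn ψ hmaps hinj
  have hmem : a ∈ (cuts n u i).filter (fun c => c < t) := Finset.mem_filter.2 ⟨haK, hat⟩
  have herase := Finset.card_erase_of_mem hmem
  have hposit : 0 < ((cuts n u i).filter (fun c => c < t)).card :=
    Finset.card_pos.2 ⟨a, hmem⟩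
  rw [posOf, posOf] at hpos
  omega

lemma transport_mono (hGu : Good n u) (hGw : Good n w) (h2 : i < n)
    (hEq : ∀ j, i < j → j < n →
      (∀ s : ℤ, 0 ≤ s → s ≤ (j:ℤ) → ((s:ℝ) < u j ↔ (s:ℝ) < w j)) ∧
      (∀ j', j < j' → j' < n → (u j < u j' ↔ w j < w j')))
    (ht' : t' ∉ cuts n w i)
    (hpos : posOf t (cuts n u i) = posOf t' (cuts n w i)) :
    (∀ s : ℤ, 0 ≤ s → s ≤ (i:ℤ) → (s:ℝ) < t → (s:ℝ) < t') ∧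
    (∀ j, i < j → j < n → u j < t → w j < t') := by
  constructor
  · intro s hs0 hsi hst
    by_contra hns
    have hsK' : (s:ℝ) ∈ cuts n w i := mem_cuts_int hs0 hsi
    have hts : t' < (s:ℝ) :=
      lt_of_le_of_ne (not_lt.1 hns) (fun h => ht' (by rw [h]; exact hsK'))
    refine transport_aux hGu hGw h2 hpos (s:ℝ) (mem_cuts_int hs0 hsi) hst ?_ ?_
    · intro s' hs'0 hs'i hs't'
      have h1 : (s':ℝ) < (s:ℝ) := lt_trans hs't' hts
      exact ⟨lt_trans h1 hst, ne_of_lt h1⟩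
    · intro j hij hjn hwj
      have hwjs : w j < (s:ℝ) := lt_trans hwj hts
      have hsj : s ≤ (j:ℤ) := le_trans hsi (by exact_mod_cast Nat.le_of_lt hij)
      have hne_u : (s:ℝ) ≠ u j :=
        (hGu j (Nat.lt_of_le_of_lt (Nat.zero_le i) hij) hjn).1 s hs0 hsj
      have hne_w : (s:ℝ) ≠ w j :=
        (hGw j (Nat.lt_of_le_of_lt (Nat.zero_le i) hij) hjn).1 s hs0 hsj
      have hiff := (hEq j hij hjn).1 s hs0 hsj
      have hflip := lt_flip hne_u hne_w hiff
      exact ⟨lt_trans (hflip.2 hwjs) hst, ne_of_lt (hflip.2 hwjs)⟩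
  · intro j hij hjn hujt
    by_contra hnw
    have hwjK : w j ∈ cuts n w i := mem_cuts_val hij hjn
    have htw : t' < w j :=
      lt_of_le_of_ne (not_lt.1 hnw) (fun h => ht' (by rw [h]; exact hwjK))
    refine transport_aux hGu hGw h2 hpos (u j) (mem_cuts_val hij hjn) hujt ?_ ?_
    · intro s hs0 hsi hst'
      have hsw : (s:ℝ) < w j := lt_trans hst' htw
      have hsj : s ≤ (j:ℤ) := le_trans hsi (by exact_mod_cast Nat.le_of_lt hij)
      have hiff := (hEq j hij hjn).1 s hs0 hsj
      have hsu : (s:ℝ) < u j := hiff.2 hsw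
      exact ⟨lt_trans hsu hujt, ne_of_lt hsu⟩
    · intro j' hij' hj'n hwj'
      have hww : w j' < w j := lt_trans hwj' htw
      rcases Nat.lt_or_ge j' j with hlt | hge
      · have hiff := (hEq j' hij' hj'n).2 j hlt hjn
        have huu := hiff.2 hww
        exact ⟨lt_trans huu hujt, ne_of_lt huu⟩
      · have hlt : j < j' := by
          rcases Nat.eq_or_lt_of_le hge with rfl | h
          · exact absurd hww (lt_irrefl _)
          · exact h
        have hiff := (hEq j hij hjn).2 j' hlt hj'n
        have hneu : u j ≠ u j' :=
          (hGu j (Nat.lt_of_le_of_lt (Nat.zero_le i) hij) hjn).2 j' hlt hj'n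
        have hnew : w j ≠ w j' :=
          (hGw j (Nat.lt_of_le_of_lt (Nat.zero_le i) hij) hjn).2 j' hlt hj'n
        have hflip := lt_flip hneu hnew hiff
        have huu := hflip.2 hww
        exact ⟨lt_trans huu hujt, ne_of_lt huu⟩

lemma transport (hGu : Good n u) (hGw : Good n w) (h2 : i < n)
    (hEq : ∀ j, i < j → j < n →
      (∀ s : ℤ, 0 ≤ s → s ≤ (j:ℤ) → ((s:ℝ) < u j ↔ (s:ℝ) < w j)) ∧
      (∀ j', j < j' → j' < n → (u j < u j' ↔ w j < w j')))
    (ht : t ∉ cuts n u i) (ht' : t' ∉ cuts n w i)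
    (hpos : posOf t (cuts n u i) = posOf t' (cuts n w i)) :
    (∀ s : ℤ, 0 ≤ s → s ≤ (i:ℤ) → ((s:ℝ) < t ↔ (s:ℝ) < t')) ∧
    (∀ j, i < j → j < n → (u j < t ↔ w j < t')) := by
  have hEq' : ∀ j, i < j → j < n →
      (∀ s : ℤ, 0 ≤ s → s ≤ (j:ℤ) → ((s:ℝ) < w j ↔ (s:ℝ) < u j)) ∧
      (∀ j', j < j' → j' < n → (w j < w j' ↔ u j < u j')) := by
    intro j hj hjn
    exact ⟨fun s a b => ((hEq j hj hjn).1 s a b).symm,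
      fun j' a b => ((hEq j hj hjn).2 j' a b).symm⟩
  have m1 := transport_mono hGu hGw h2 hEq ht' hpos
  have m2 := transport_mono hGw hGu h2 hEq' ht hpos.symm
  exact ⟨fun s a b => ⟨m1.1 s a b, m2.1 s a b⟩, fun j a b => ⟨m1.2 j a b, m2.2 j a b⟩⟩

end Transport

end Statement15

/-! ### The equivalence of configurations and codes -/

namespace Statement15
open Finset

noncomputable def gc (n : ℕ) (u : ℕ → ℝ) (i : ℕ) : ℕ := posOf (u i) (cuts n u i)

def Equ (n : ℕ) (u w : ℕ → ℝ) : Prop := ∀ i, 1 ≤ i → i < n →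
  (∀ s : ℤ, 0 ≤ s → s ≤ (i:ℤ) → ((s:ℝ) < u i ↔ (s:ℝ) < w i)) ∧
  (∀ j, i < j → j < n → (u i < u j ↔ w i < w j))

lemma Equ.symm {n : ℕ} {u w : ℕ → ℝ} (h : Equ n u w) : Equ n w u := fun i h1 h2 =>
  ⟨fun s a b => ((h i h1 h2).1 s a b).symm, fun j a b => ((h i h1 h2).2 j a b).symm⟩

lemma Equ.trans {n : ℕ} {u v w : ℕ → ℝ} (h : Equ n u v) (h' : Equ n v w) : Equ n u w :=
  fun i h1 h2 =>
    ⟨fun s a b => ((h i h1 h2).1 s a b).trans ((h' i h1 h2).1 s a b),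
     fun j a b => ((h i h1 h2).2 j a b).trans ((h' i h1 h2).2 j a b)⟩

lemma equ_of_eqOn {n : ℕ} {u u' : ℕ → ℝ} (h : ∀ i, 1 ≤ i → i < n → u i = u' i) :
    Equ n u u' := by
  intro i h1 h2
  constructor
  · intro s _ _; rw [h i h1 h2]
  · intro j hj hjn; rw [h i h1 h2, h j (by omega) hjn]

lemma good_of_eqOn {n : ℕ} {u u' : ℕ → ℝ} (h : ∀ i, 1 ≤ i → i < n → u i = u' i)
    (hG : Good n u) : Good n u' := by
  intro j hj hjn
  refine ⟨fun s a b hs => (hG j hj hjn).1 s a b (by rw [h j (by omega) hjn]; exact hs), ?_⟩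
  intro j' hj' hj'n heq
  exact (hG j hj hjn).2 j' hj' hj'n (by rw [h j (by omega) hjn, h j' (by omega) hj'n]; exact heq)

lemma gc_le {n : ℕ} (u : ℕ → ℝ) {i : ℕ} (h2 : i < n) : gc n u i ≤ n :=
  le_trans (posOf_le _ _) (card_cuts_le u h2)

lemma gc_eqOn {n : ℕ} {u u' : ℕ → ℝ} {i : ℕ} (h : ∀ j, i ≤ j → j < n → u j = u' j)
    (h2 : i < n) : gc n u i = gc n u' i := by
  rw [gc, gc, h i (le_refl i) h2, cuts_congr (fun j hj hjn => h j (le_of_lt hj) hjn)]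

lemma gc_Y {n : ℕ} {g : ℕ → ℕ} (hg : ∀ i, i < n → g i ≤ n) {i : ℕ}
    (h1 : 1 ≤ i) (h2 : i < n) : gc n (Y n g) i = g i := Y_posOf hg h1 h2

lemma equ_decode {n : ℕ} {u : ℕ → ℝ} (hGu : Good n u) : Equ n u (Y n (gc n u)) := by
  have hgle : ∀ i, i < n → gc n u i ≤ n := fun i hi => gc_le u hi
  have hGw : Good n (Y n (gc n u)) := Y_good hgle
  intro i0 h10 h20
  suffices H : ∀ d i, n ≤ i + d → 1 ≤ i → i < n →
      ((∀ s : ℤ, 0 ≤ s → s ≤ (i:ℤ) → ((s:ℝ) < u i ↔ (s:ℝ) < Y n (gc n u) i)) ∧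
       (∀ j, i < j → j < n → (u i < u j ↔ Y n (gc n u) i < Y n (gc n u) j))) by
    exact H n i0 (by omega) h10 h20
  intro d
  induction d with
  | zero => intro i hi h1 h2; exact absurd h2 (by omega)
  | succ d ih =>
    intro i hi h1 h2
    have hEq : ∀ j, i < j → j < n →
        (∀ s : ℤ, 0 ≤ s → s ≤ (j:ℤ) → ((s:ℝ) < u j ↔ (s:ℝ) < Y n (gc n u) j)) ∧
        (∀ j', j < j' → j' < n → (u j < u j' ↔ Y n (gc n u) j < Y n (gc n u) j')) :=
      fun j hj hjn => ih j (by omega) (by omega) hjn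
    have hposw : posOf (Y n (gc n u) i) (cuts n (Y n (gc n u)) i) = gc n u i :=
      Y_posOf hgle h1 h2
    have hpos : posOf (u i) (cuts n u i) =
        posOf (Y n (gc n u) i) (cuts n (Y n (gc n u)) i) := by
      rw [hposw]; rfl
    have ht := good_not_mem_cuts hGu h1 h2
    have ht' := good_not_mem_cuts hGw h1 h2
    have htr := transport hGu hGw h2 hEq ht ht' hpos
    refine ⟨htr.1, fun j hj hjn => ?_⟩
    have hneu : u j ≠ u i := ((hGu i h1 h2).2 j hj hjn).symm
    have hnew : Y n (gc n u) j ≠ Y n (gc n u) i := ((hGw i h1 h2).2 j hj hjn).symm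
    exact lt_flip hneu hnew (htr.2 j hj hjn)

lemma gc_congr {n : ℕ} {u w : ℕ → ℝ} (hGu : Good n u) (hGw : Good n w)
    (hE : Equ n u w) {i : ℕ} (h1 : 1 ≤ i) (h2 : i < n) : gc n u i = gc n w i := by
  have key : ∀ (v : ℕ → ℝ), Good n v → gc n v i =
      ((intCuts i).filter (fun c => c < v i)).card +
      ((Finset.Ioo i n).filter (fun j => v j < v i)).card := by
    intro v hGv
    rw [gc, posOf, cuts, Finset.filter_union,
      Finset.card_union_of_disjoint
        (Finset.disjoint_filter_filter (disj_of_goodAbove (hGv.goodAbove i))),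
      Finset.filter_image,
      Finset.card_image_of_injOn ((injOn_of_goodAbove (hGv.goodAbove i)).mono
        (Finset.coe_subset.2 (Finset.filter_subset _ _)))]
  have e1 : (intCuts i).filter (fun c => c < u i) = (intCuts i).filter (fun c => c < w i) := by
    apply Finset.filter_congr
    intro c hc
    obtain ⟨s, hs0, hsi, rfl⟩ := mem_intCuts.1 hc
    exact (hE i h1 h2).1 s hs0 hsi
  have e2 : (Finset.Ioo i n).filter (fun j => u j < u i) =
      (Finset.Ioo i n).filter (fun j => w j < w i) := by
    apply Finset.filter_congr
    intro j hj
    rw [Finset.mem_Ioo] at hj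
    have hneu : u i ≠ u j := (hGu i h1 h2).2 j hj.1 hj.2
    have hnew : w i ≠ w j := (hGw i h1 h2).2 j hj.1 hj.2
    exact lt_flip hneu hnew ((hE i h1 h2).2 j hj.1 hj.2)
  rw [key u hGu, key w hGw, e1, e2]

end Statement15

/-! ### Translation to points of `ℝ^n` -/

namespace Statement15

noncomputable def S0 (n : ℕ) : Fin n → Fin n → Finset ℤ := fun i j =>
  if (i : ℕ) = 0 then Finset.Icc (0 : ℤ) ((j : ℕ) : ℤ) else {0}

section Xside
variable {n : ℕ} [NeZero n]

noncomputable def yv (x : Fin n → ℝ) : ℕ → ℝ := fun i =>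
  if h : i < n then x 0 - x ⟨i, h⟩ else 0

lemma yv_apply (x : Fin n → ℝ) {i : ℕ} (h : i < n) : yv x i = x 0 - x ⟨i, h⟩ := dif_pos h

lemma yv_fin (x : Fin n → ℝ) (j : Fin n) : yv x (j : ℕ) = x 0 - x j := by
  rw [yv, dif_pos j.isLt, Fin.eta]

lemma yv_zero (x : Fin n → ℝ) : yv x 0 = 0 := by
  have h0 : (0:ℕ) < n := Nat.pos_of_ne_zero (NeZero.ne n)
  rw [yv, dif_pos h0]
  have : (⟨0, h0⟩ : Fin n) = 0 := Fin.ext (by simp)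
  rw [this, sub_self]

lemma mem_comp_iff_good {x : Fin n → ℝ} :
    x ∈ complementSet (S0 n) ↔ Good n (yv x) := by
  constructor
  · intro hx j hj1 hjn
    set J : Fin n := ⟨j, hjn⟩ with hJ
    have hJ0 : (0 : Fin n) < J := by
      rw [Fin.lt_def, Fin.val_zero]
      show 0 < j
      omega
    constructor
    · intro s hs0 hsj heq
      have hmem : s ∈ S0 n 0 J := by
        simp only [S0]
        rw [if_pos (Fin.val_zero n)]
        exact Finset.mem_Icc.2 ⟨hs0, hsj⟩
      exact hx 0 J hJ0 s hmem (by rw [← yv_apply x hjn]; exact heq.symm)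
    · intro j' hjj' hj'n heq
      set J' : Fin n := ⟨j', hj'n⟩ with hJ'
      have hJJ' : J < J' := by rw [Fin.lt_def]; exact hjj'
      have hmem : (0:ℤ) ∈ S0 n J J' := by
        simp only [S0]
        rw [if_neg (show ¬ ((J:ℕ) = 0) by simp [hJ]; omega)]
        exact Finset.mem_singleton_self 0
      apply hx J J' hJJ' 0 hmem
      rw [yv_apply x hjn, yv_apply x hj'n] at heq
      push_cast
      linarith
  · intro hG I J hIJ s hs
    by_cases hI0 : (I : ℕ) = 0
    · simp only [S0] at hs
      rw [if_pos hI0, Finset.mem_Icc] at hs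
      have hI : I = 0 := Fin.ext (by simpa using hI0)
      have hJ1 : 1 ≤ (J : ℕ) := by
        rw [Fin.lt_def, hI0] at hIJ
        omega
      have := (hG (J : ℕ) hJ1 J.isLt).1 s hs.1 hs.2
      rw [yv_fin x J] at this
      rw [hI]
      exact fun heq => this heq.symm
    · simp only [S0] at hs
      rw [if_neg hI0, Finset.mem_singleton] at hs
      subst hs
      have hI1 : 1 ≤ (I : ℕ) := Nat.pos_of_ne_zero hI0
      have := (hG (I : ℕ) hI1 I.isLt).2 (J : ℕ) (by rw [Fin.lt_def] at hIJ; exact hIJ) J.isLt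
      rw [yv_fin x I, yv_fin x J] at this
      intro heq
      apply this
      push_cast at heq
      have : x I = x J := by linarith [sub_eq_zero.1 (by linarith : x I - x J = 0)]
      rw [this]

/-- The combinatorial data of a point: the order of its coordinates together with the
position of each difference `x 0 - x j` relative to the integers `0, …, j`. -/
def dat (x : Fin n → ℝ) : (Fin n → Fin n → Prop) × (Fin n → Set ℤ) :=
  (fun i j => x i < x j,
   fun j => {s : ℤ | 0 ≤ s ∧ s ≤ ((j : ℕ) : ℤ) ∧ (s:ℝ) < x 0 - x j})

lemma dat_eq_iff {x x' : Fin n → ℝ} (hx : Good n (yv x)) (hx' : Good n (yv x')) :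
    dat x = dat x' ↔ Equ n (yv x) (yv x') := by
  constructor
  · intro h
    have h1 : ∀ i j : Fin n, (x i < x j) ↔ (x' i < x' j) := by
      intro i j
      exact Iff.of_eq (congrFun (congrFun (congrArg Prod.fst h) i) j)
    have h2 : ∀ (j : Fin n) (s : ℤ),
        (0 ≤ s ∧ s ≤ ((j:ℕ):ℤ) ∧ (s:ℝ) < x 0 - x j) ↔
        (0 ≤ s ∧ s ≤ ((j:ℕ):ℤ) ∧ (s:ℝ) < x' 0 - x' j) := by
      intro j s
      exact Set.ext_iff.1 (congrFun (congrArg Prod.snd h) j) s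
    intro i hi1 hin
    set I : Fin n := ⟨i, hin⟩ with hI
    constructor
    · intro s hs0 hsi
      rw [yv_apply x hin, yv_apply x' hin]
      have hIv : ((I:ℕ):ℤ) = (i:ℤ) := by simp [hI]
      constructor
      · intro hlt
        exact ((h2 I s).1 ⟨hs0, by rw [hIv]; exact hsi, hlt⟩).2.2
      · intro hlt
        exact ((h2 I s).2 ⟨hs0, by rw [hIv]; exact hsi, hlt⟩).2.2
    · intro j hij hjn
      set J : Fin n := ⟨j, hjn⟩ with hJ
      rw [yv_apply x hin, yv_apply x hjn, yv_apply x' hin, yv_apply x' hjn]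
      constructor
      · intro hlt
        have : x J < x I := by linarith
        have := (h1 J I).1 this
        linarith
      · intro hlt
        have : x' J < x' I := by linarith
        have := (h1 J I).2 this
        linarith
  · intro hE
    have hord : ∀ I J : Fin n, (x I < x J) ↔ (x' I < x' J) := by
      intro I J
      by_cases hI0 : (I:ℕ) = 0 <;> by_cases hJ0 : (J:ℕ) = 0
      · have : I = J := Fin.ext (by omega)
        subst this
        simp
      · -- I = 0, J ≥ 1 : x 0 < x J ↔ yv x J < 0
        have hI : I = 0 := Fin.ext (by simpa using hI0)
        have hJ1 : 1 ≤ (J:ℕ) := Nat.pos_of_ne_zero hJ0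
        have hiff0 := (hE (J:ℕ) hJ1 J.isLt).1 0 (le_refl 0) (by exact_mod_cast Nat.zero_le _)
        have hneu : (0:ℝ) ≠ yv x (J:ℕ) := by
          exact_mod_cast (hx (J:ℕ) hJ1 J.isLt).1 0 (le_refl 0) (by exact_mod_cast Nat.zero_le _)
        have hnew : (0:ℝ) ≠ yv x' (J:ℕ) := by
          exact_mod_cast (hx' (J:ℕ) hJ1 J.isLt).1 0 (le_refl 0) (by exact_mod_cast Nat.zero_le _)
        have hflip := lt_flip hneu hnew (by simpa using hiff0)
        rw [yv_fin x J, yv_fin x' J] at hflip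
        subst hI
        constructor
        · intro hlt; have := hflip.1 (by simpa using (by linarith : x 0 - x J < 0)); linarith
        · intro hlt; have := hflip.2 (by simpa using (by linarith : x' 0 - x' J < 0)); linarith
      · -- J = 0, I ≥ 1 : x I < x 0 ↔ 0 < yv x I
        have hJ : J = 0 := Fin.ext (by simpa using hJ0)
        have hI1 : 1 ≤ (I:ℕ) := Nat.pos_of_ne_zero hI0
        have hiff0 := (hE (I:ℕ) hI1 I.isLt).1 0 (le_refl 0) (by exact_mod_cast Nat.zero_le _)
        rw [yv_fin x I, yv_fin x' I] at hiff0
        subst hJ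
        push_cast at hiff0
        constructor
        · intro hlt; have := hiff0.1 (by linarith); linarith
        · intro hlt; have := hiff0.2 (by linarith); linarith
      · -- both ≥ 1
        have hI1 : 1 ≤ (I:ℕ) := Nat.pos_of_ne_zero hI0
        have hJ1 : 1 ≤ (J:ℕ) := Nat.pos_of_ne_zero hJ0
        rcases Nat.lt_trichotomy (I:ℕ) (J:ℕ) with hlt | heq | hgt
        · -- x I < x J ↔ yv J < yv I ; pair clause at (I,J) flipped
          have hpair := (hE (I:ℕ) hI1 I.isLt).2 (J:ℕ) hlt J.isLt
          have hneu : yv x (I:ℕ) ≠ yv x (J:ℕ) := (hx (I:ℕ) hI1 I.isLt).2 (J:ℕ) hlt J.isLt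
          have hnew : yv x' (I:ℕ) ≠ yv x' (J:ℕ) := (hx' (I:ℕ) hI1 I.isLt).2 (J:ℕ) hlt J.isLt
          have hflip := lt_flip hneu hnew hpair
          rw [yv_fin x I, yv_fin x J, yv_fin x' I, yv_fin x' J] at hflip
          constructor
          · intro h; have := hflip.1 (by linarith); linarith
          · intro h; have := hflip.2 (by linarith); linarith
        · have : I = J := Fin.ext heq
          subst this; simp
        · have hpair := (hE (J:ℕ) hJ1 J.isLt).2 (I:ℕ) hgt I.isLt
          rw [yv_fin x I, yv_fin x J, yv_fin x' I, yv_fin x' J] at hpair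
          constructor
          · intro h; have := hpair.1 (by linarith); linarith
          · intro h; have := hpair.2 (by linarith); linarith
    have hsets : ∀ (J : Fin n) (s : ℤ),
        (0 ≤ s ∧ s ≤ ((J:ℕ):ℤ) ∧ (s:ℝ) < x 0 - x J) ↔
        (0 ≤ s ∧ s ≤ ((J:ℕ):ℤ) ∧ (s:ℝ) < x' 0 - x' J) := by
      intro J s
      by_cases hJ0 : (J:ℕ) = 0
      · have hJ : J = 0 := Fin.ext (by simpa using hJ0)
        subst hJ
        have hfalse : ∀ (z : Fin n → ℝ), ¬ (0 ≤ s ∧ s ≤ (((0:Fin n):ℕ):ℤ) ∧ (s:ℝ) < z 0 - z 0) := by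
          rintro z ⟨hs0, hsJ, hlt⟩
          simp only [Fin.val_zero, Nat.cast_zero] at hsJ
          have hs : s = 0 := le_antisymm hsJ hs0
          subst hs
          simp at hlt
        exact ⟨fun h => absurd h (hfalse x), fun h => absurd h (hfalse x')⟩
      · have hJ1 : 1 ≤ (J:ℕ) := Nat.pos_of_ne_zero hJ0
        have hiff := (hE (J:ℕ) hJ1 J.isLt).1
        rw [yv_fin x J, yv_fin x' J] at hiff
        constructor
        · rintro ⟨hs0, hsJ, hlt⟩
          exact ⟨hs0, hsJ, (hiff s hs0 hsJ).1 hlt⟩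
        · rintro ⟨hs0, hsJ, hlt⟩
          exact ⟨hs0, hsJ, (hiff s hs0 hsJ).2 hlt⟩
    rw [dat, dat, Prod.mk.injEq]
    constructor
    · funext I J
      exact propext (hord I J)
    · funext J
      exact Set.ext (hsets J)

end Xside

end Statement15

/-! ### The regions as fibers of the data map -/

namespace Statement15

section Topo
variable {n : ℕ} [NeZero n]

def Gs (x₀ : Fin n → ℝ) : Set (Fin n → ℝ) :=
  (⋂ (i : Fin n), ⋂ (j : Fin n), {x | x₀ i < x₀ j → x i < x j}) ∩
  ⋂ (j : Fin n), ⋂ s ∈ Finset.Icc (0:ℤ) ((j:ℕ):ℤ),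
    ({x | (s:ℝ) < x₀ 0 - x₀ j → (s:ℝ) < x 0 - x j} ∩
     {x | x₀ 0 - x₀ j < (s:ℝ) → x 0 - x j < (s:ℝ)})

lemma mem_Gs {x₀ x : Fin n → ℝ} : x ∈ Gs x₀ ↔
    (∀ i j : Fin n, x₀ i < x₀ j → x i < x j) ∧
    (∀ j : Fin n, ∀ s : ℤ, 0 ≤ s → s ≤ ((j:ℕ):ℤ) →
      ((s:ℝ) < x₀ 0 - x₀ j → (s:ℝ) < x 0 - x j) ∧
      (x₀ 0 - x₀ j < (s:ℝ) → x 0 - x j < (s:ℝ))) := by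
  simp only [Gs, Set.mem_inter_iff, Set.mem_iInter, Set.mem_setOf_eq, Finset.mem_Icc]
  constructor
  · rintro ⟨h1, h2⟩
    exact ⟨h1, fun j s hs0 hsj => h2 j s ⟨hs0, hsj⟩⟩
  · rintro ⟨h1, h2⟩
    exact ⟨h1, fun j s hs => h2 j s hs.1 hs.2⟩

lemma isOpen_Gs (x₀ : Fin n → ℝ) : IsOpen (Gs x₀) := by
  apply IsOpen.inter
  · apply isOpen_iInter_of_finite; intro i
    apply isOpen_iInter_of_finite; intro j
    by_cases h : x₀ i < x₀ j
    · have he : {x : Fin n → ℝ | x₀ i < x₀ j → x i < x j} = {x | x i < x j} := by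
        ext y; simp [h]
      rw [he]; exact isOpen_lt (continuous_apply i) (continuous_apply j)
    · have he : {x : Fin n → ℝ | x₀ i < x₀ j → x i < x j} = Set.univ := by
        ext y; simp [h]
      rw [he]; exact isOpen_univ
  · apply isOpen_iInter_of_finite; intro j
    apply isOpen_biInter_finset; intro s _
    apply IsOpen.inter
    · by_cases h : (s:ℝ) < x₀ 0 - x₀ j
      · have he : {x : Fin n → ℝ | (s:ℝ) < x₀ 0 - x₀ j → (s:ℝ) < x 0 - x j} =
            {x : Fin n → ℝ | (s:ℝ) < x 0 - x j} := by ext y; simp [h]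
        rw [he]
        exact isOpen_lt continuous_const ((continuous_apply 0).sub (continuous_apply j))
      · have he : {x : Fin n → ℝ | (s:ℝ) < x₀ 0 - x₀ j → (s:ℝ) < x 0 - x j} = Set.univ := by
          ext y; simp [h]
        rw [he]; exact isOpen_univ
    · by_cases h : x₀ 0 - x₀ j < (s:ℝ)
      · have he : {x : Fin n → ℝ | x₀ 0 - x₀ j < (s:ℝ) → x 0 - x j < (s:ℝ)} =
            {x : Fin n → ℝ | x 0 - x j < (s:ℝ)} := by ext y; simp [h]
        rw [he]
        exact isOpen_lt ((continuous_apply 0).sub (continuous_apply j)) continuous_const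
      · have he : {x : Fin n → ℝ | x₀ 0 - x₀ j < (s:ℝ) → x 0 - x j < (s:ℝ)} = Set.univ := by
          ext y; simp [h]
        rw [he]; exact isOpen_univ

lemma convex_Gs (x₀ : Fin n → ℝ) : Convex ℝ (Gs x₀) := by
  have hlin : ∀ i j : Fin n, IsLinearMap ℝ (fun x : Fin n → ℝ => x i - x j) := by
    intro i j
    exact ⟨fun a b => by simp only [Pi.add_apply]; ring,
           fun c a => by simp only [Pi.smul_apply, smul_eq_mul]; ring⟩
  apply Convex.inter
  · apply convex_iInter; intro i
    apply convex_iInter; intro j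
    by_cases h : x₀ i < x₀ j
    · have he : {x : Fin n → ℝ | x₀ i < x₀ j → x i < x j} =
          {x : Fin n → ℝ | x i - x j < 0} := by
        ext y; simp [h, sub_neg]
      rw [he]
      exact convex_halfSpace_lt (hlin i j) 0
    · have he : {x : Fin n → ℝ | x₀ i < x₀ j → x i < x j} = Set.univ := by ext y; simp [h]
      rw [he]; exact convex_univ
  · apply convex_iInter; intro j
    apply convex_iInter; intro s
    apply convex_iInter; intro _
    apply Convex.inter
    · by_cases h : (s:ℝ) < x₀ 0 - x₀ j
      · have he : {x : Fin n → ℝ | (s:ℝ) < x₀ 0 - x₀ j → (s:ℝ) < x 0 - x j} =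
            {x : Fin n → ℝ | (s:ℝ) < x 0 - x j} := by ext y; simp [h]
        rw [he]
        exact convex_halfSpace_gt (hlin 0 j) (s:ℝ)
      · have he : {x : Fin n → ℝ | (s:ℝ) < x₀ 0 - x₀ j → (s:ℝ) < x 0 - x j} = Set.univ := by
          ext y; simp [h]
        rw [he]; exact convex_univ
    · by_cases h : x₀ 0 - x₀ j < (s:ℝ)
      · have he : {x : Fin n → ℝ | x₀ 0 - x₀ j < (s:ℝ) → x 0 - x j < (s:ℝ)} =
            {x : Fin n → ℝ | x 0 - x j < (s:ℝ)} := by ext y; simp [h]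
        rw [he]
        exact convex_halfSpace_lt (hlin 0 j) (s:ℝ)
      · have he : {x : Fin n → ℝ | x₀ 0 - x₀ j < (s:ℝ) → x 0 - x j < (s:ℝ)} = Set.univ := by
          ext y; simp [h]
        rw [he]; exact convex_univ

lemma Gs_self (x : Fin n → ℝ) : x ∈ Gs x :=
  mem_Gs.2 ⟨fun _ _ h => h, fun _ _ _ _ => ⟨id, id⟩⟩

lemma comp_distinct {x : Fin n → ℝ} (hx : x ∈ complementSet (S0 n)) {I J : Fin n}
    (hIJ : I ≠ J) : x I ≠ x J := by
  have key : ∀ A B : Fin n, A < B → x A ≠ x B := by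
    intro A B hAB
    have h0 : (0:ℤ) ∈ S0 n A B := by
      simp only [S0]
      by_cases hA0 : (A:ℕ) = 0
      · rw [if_pos hA0]
        exact Finset.mem_Icc.2 ⟨le_refl 0, by exact_mod_cast Nat.zero_le _⟩
      · rw [if_neg hA0]; exact Finset.mem_singleton_self 0
    have := hx A B hAB 0 h0
    push_cast at this
    intro heq
    exact this (by rw [heq]; ring)
  rcases lt_or_gt_of_ne hIJ with h | h
  · exact key I J h
  · exact (key J I h).symm

lemma Gs_subset {x₀ : Fin n → ℝ} (hx₀ : x₀ ∈ complementSet (S0 n)) :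
    Gs x₀ ⊆ complementSet (S0 n) := by
  intro x hx
  rw [mem_Gs] at hx
  intro I J hIJ s hs
  by_cases hI0 : (I:ℕ) = 0
  · have hI : I = 0 := Fin.ext (by simpa using hI0)
    subst hI
    simp only [S0] at hs
    rw [if_pos (Fin.val_zero n), Finset.mem_Icc] at hs
    have h0 := hx₀ 0 J hIJ s (by
      simp only [S0]; rw [if_pos (Fin.val_zero n)]; exact Finset.mem_Icc.2 hs)
    rcases lt_or_gt_of_ne h0 with hlt | hgt
    · exact ne_of_lt ((hx.2 J s hs.1 hs.2).2 hlt)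
    · exact ne_of_gt ((hx.2 J s hs.1 hs.2).1 hgt)
  · simp only [S0] at hs
    rw [if_neg hI0, Finset.mem_singleton] at hs
    subst hs
    have hne : x₀ I ≠ x₀ J := comp_distinct hx₀ (ne_of_lt hIJ)
    push_cast
    rcases lt_or_gt_of_ne hne with hlt | hgt
    · exact sub_ne_zero.2 (ne_of_lt (hx.1 I J hlt))
    · exact sub_ne_zero.2 (ne_of_gt (hx.1 J I hgt))

lemma ord_iff_of_mem_Gs {x₀ x : Fin n → ℝ} (hx₀ : x₀ ∈ complementSet (S0 n))
    (hG : x ∈ Gs x₀) : ∀ I J : Fin n, x I < x J ↔ x₀ I < x₀ J := by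
  intro I J
  rw [mem_Gs] at hG
  constructor
  · intro h
    by_cases hIJ : I = J
    · subst hIJ; exact absurd h (lt_irrefl _)
    · rcases lt_or_gt_of_ne (comp_distinct hx₀ hIJ) with h' | h'
      · exact h'
      · exact absurd (hG.1 J I h') (lt_asymm h)
  · exact hG.1 I J

lemma mem_Gs_iff_dat {x₀ x : Fin n → ℝ} (hx₀ : x₀ ∈ complementSet (S0 n))
    (hx : x ∈ complementSet (S0 n)) : x ∈ Gs x₀ ↔ dat x = dat x₀ := by
  constructor
  · intro hG
    have hord := ord_iff_of_mem_Gs hx₀ hG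
    rw [mem_Gs] at hG
    rw [dat, dat, Prod.mk.injEq]
    constructor
    · funext I J
      exact propext (hord I J)
    · funext J
      apply Set.ext
      intro s
      simp only [Set.mem_setOf_eq]
      constructor
      · rintro ⟨hs0, hsJ, hlt⟩
        refine ⟨hs0, hsJ, ?_⟩
        by_cases hJ0 : J = 0
        · subst hJ0
          simp only [sub_self] at hlt ⊢
          exact hlt
        · by_contra hcon
          have hne := hx₀ 0 J (by
            rw [Fin.lt_def]
            have : (J:ℕ) ≠ 0 := fun h => hJ0 (Fin.ext (by simpa using h))
            simp only [Fin.val_zero]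
            omega) s (by
            simp only [S0]; rw [if_pos (Fin.val_zero n)]; exact Finset.mem_Icc.2 ⟨hs0, hsJ⟩)
          have hlt₀ : x₀ 0 - x₀ J < (s:ℝ) := lt_of_le_of_ne (not_lt.1 hcon) hne
          exact absurd ((hG.2 J s hs0 hsJ).2 hlt₀) (not_lt.2 (le_of_lt hlt))
      · rintro ⟨hs0, hsJ, hlt⟩
        exact ⟨hs0, hsJ, (hG.2 J s hs0 hsJ).1 hlt⟩
  · intro hd
    have h1 : ∀ I J : Fin n, (x I < x J) ↔ (x₀ I < x₀ J) := by
      intro I J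
      exact Iff.of_eq (congrFun (congrFun (congrArg Prod.fst hd) I) J)
    have h2 : ∀ (J : Fin n) (s : ℤ),
        (0 ≤ s ∧ s ≤ ((J:ℕ):ℤ) ∧ (s:ℝ) < x 0 - x J) ↔
        (0 ≤ s ∧ s ≤ ((J:ℕ):ℤ) ∧ (s:ℝ) < x₀ 0 - x₀ J) := by
      intro J s
      exact Set.ext_iff.1 (congrFun (congrArg Prod.snd hd) J) s
    rw [mem_Gs]
    refine ⟨fun I J h => (h1 I J).2 h, ?_⟩
    intro J s hs0 hsJ
    constructor
    · intro hlt
      exact ((h2 J s).2 ⟨hs0, hsJ, hlt⟩).2.2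
    · intro hlt
      by_cases hJ0 : J = 0
      · subst hJ0
        simpa using (by simpa using hlt : x₀ 0 - x₀ 0 < (s:ℝ))
      · have hJne : (0 : Fin n) < J := by
          rw [Fin.lt_def]
          have : (J:ℕ) ≠ 0 := fun h => hJ0 (Fin.ext (by simpa using h))
          simp only [Fin.val_zero]
          omega
        have hne := hx 0 J hJne s (by
          simp only [S0]; rw [if_pos (Fin.val_zero n)]; exact Finset.mem_Icc.2 ⟨hs0, hsJ⟩)
        have hnlt : ¬ (s:ℝ) < x 0 - x J := fun h =>
          absurd ((h2 J s).1 ⟨hs0, hsJ, h⟩).2.2 (not_lt.2 (le_of_lt hlt))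
        exact lt_of_le_of_ne (not_lt.1 hnlt) hne

lemma Gs_eq_of_dat {x₀ x : Fin n → ℝ} (hx₀ : x₀ ∈ complementSet (S0 n))
    (hx : x ∈ complementSet (S0 n)) (hd : dat x = dat x₀) : Gs x = Gs x₀ := by
  ext w
  constructor
  · intro hw
    have hwC := Gs_subset hx hw
    have h1 := (mem_Gs_iff_dat hx hwC).1 hw
    exact (mem_Gs_iff_dat hx₀ hwC).2 (h1.trans hd)
  · intro hw
    have hwC := Gs_subset hx₀ hw
    have h1 := (mem_Gs_iff_dat hx₀ hwC).1 hw
    exact (mem_Gs_iff_dat hx hwC).2 (h1.trans hd.symm)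

lemma comp_eq {x₀ : Fin n → ℝ} (hx₀ : x₀ ∈ complementSet (S0 n)) :
    connectedComponent (⟨x₀, hx₀⟩ : ↥(complementSet (S0 n))) = Subtype.val ⁻¹' (Gs x₀) := by
  apply subset_antisymm
  · apply IsClopen.connectedComponent_subset
    · constructor
      · rw [← isOpen_compl_iff]
        have hcompl : (Subtype.val ⁻¹' (Gs x₀) : Set ↥(complementSet (S0 n)))ᶜ =
            Subtype.val ⁻¹'
              (⋃ (z : Fin n → ℝ) (_ : z ∈ complementSet (S0 n) ∧ z ∉ Gs x₀), Gs z) := by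
          ext w
          simp only [Set.mem_compl_iff, Set.mem_preimage, Set.mem_iUnion]
          constructor
          · intro hw
            exact ⟨w.val, ⟨w.2, hw⟩, Gs_self w.val⟩
          · rintro ⟨z, ⟨hzC, hzn⟩, hwz⟩ hwG
            have hwC := w.2
            have hd1 := (mem_Gs_iff_dat hzC hwC).1 hwz
            have hd2 := (mem_Gs_iff_dat hx₀ hwC).1 hwG
            exact hzn ((mem_Gs_iff_dat hx₀ hzC).2 (hd1.symm.trans hd2))
        rw [hcompl]
        exact (isOpen_iUnion (fun z => isOpen_iUnion (fun _ => isOpen_Gs z))).preimage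
          continuous_subtype_val
      · exact (isOpen_Gs x₀).preimage continuous_subtype_val
    · exact Set.mem_preimage.2 (Gs_self x₀)
  · apply IsPreconnected.subset_connectedComponent
    · have himg : Subtype.val '' (Subtype.val ⁻¹' (Gs x₀) : Set ↥(complementSet (S0 n))) =
          Gs x₀ := by
        rw [Subtype.image_preimage_coe]
        exact Set.inter_eq_self_of_subset_right (Gs_subset hx₀)
      have hpre := (convex_Gs x₀).isPreconnected
      rw [← himg] at hpre
      exact (Topology.IsInducing.isPreconnected_image Topology.IsInducing.subtypeVal).1 hpre
    · exact Set.mem_preimage.2 (Gs_self x₀)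

end Topo

end Statement15

/-! ### Assembly: the bijection with `Fin (n-1) → Fin (n+1)` -/

namespace Statement15

section Assembly
variable {n : ℕ} [NeZero n]

noncomputable def xOf (u : ℕ → ℝ) : Fin n → ℝ := fun j => if j = 0 then 0 else -(u (j:ℕ))

lemma yv_xOf (u : ℕ → ℝ) : ∀ i, 1 ≤ i → i < n → yv (xOf u : Fin n → ℝ) i = u i := by
  intro i h1 h2
  rw [yv_apply _ h2]
  have hne : (⟨i, h2⟩ : Fin n) ≠ 0 := fun h => by
    have := congrArg Fin.val h
    simp only [Fin.val_zero] at this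
    omega
  simp [xOf, hne]

noncomputable def extg (g : Fin (n-1) → Fin (n+1)) : ℕ → ℕ := fun i =>
  if h : 1 ≤ i ∧ i < n then (g ⟨i-1, by omega⟩ : ℕ) else 0

lemma extg_le (g : Fin (n-1) → Fin (n+1)) : ∀ i, i < n → extg g i ≤ n := by
  intro i _
  rw [extg]
  by_cases h : 1 ≤ i ∧ i < n
  · rw [dif_pos h]
    exact Nat.lt_succ_iff.1 (g ⟨i-1, by omega⟩).isLt
  · rw [dif_neg h]
    exact Nat.zero_le n

noncomputable def px (g : Fin (n-1) → Fin (n+1)) : Fin n → ℝ := xOf (Y n (extg g))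

lemma good_px (g : Fin (n-1) → Fin (n+1)) : Good n (yv (px g : Fin n → ℝ)) :=
  good_of_eqOn (fun i h1 h2 => (yv_xOf (Y n (extg g)) i h1 h2).symm) (Y_good (extg_le g))

lemma px_mem (g : Fin (n-1) → Fin (n+1)) : (px g : Fin n → ℝ) ∈ complementSet (S0 n) :=
  mem_comp_iff_good.2 (good_px g)

noncomputable def Gmap (g : Fin (n-1) → Fin (n+1)) :
    ConnectedComponents ↥(complementSet (S0 n)) :=
  ConnectedComponents.mk ⟨px g, px_mem g⟩

lemma Gmap_surjective : Function.Surjective (Gmap (n := n)) := by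
  intro comp
  obtain ⟨x, rfl⟩ := ConnectedComponents.surjective_coe comp
  obtain ⟨xv, hxC⟩ := x
  have hGx : Good n (yv xv) := mem_comp_iff_good.1 hxC
  refine ⟨fun a => ⟨gc n (yv xv) ((a:ℕ)+1), by
    have ha := a.isLt
    have := gc_le (yv xv) (show (a:ℕ)+1 < n by omega)
    omega⟩, ?_⟩
  set g : Fin (n-1) → Fin (n+1) := fun a => ⟨gc n (yv xv) ((a:ℕ)+1), by
    have ha := a.isLt
    have := gc_le (yv xv) (show (a:ℕ)+1 < n by omega)
    omega⟩ with hg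
  show Gmap g = _
  rw [Gmap, ConnectedComponents.coe_eq_coe, comp_eq (px_mem g), comp_eq hxC]
  suffices hd : dat (px g : Fin n → ℝ) = dat xv by
    rw [Gs_eq_of_dat (px_mem g) hxC hd.symm]
  apply (dat_eq_iff (good_px g) hGx).2
  have hcode : ∀ i, 1 ≤ i → i < n → extg g i = gc n (yv xv) i := by
    intro i h1i h2i
    rw [extg, dif_pos ⟨h1i, h2i⟩]
    show gc n (yv xv) ((i-1)+1) = gc n (yv xv) i
    congr 1
    omega
  have hYeq : ∀ i, 1 ≤ i → i < n → Y n (extg g) i = Y n (gc n (yv xv)) i := Y_congr hcode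
  have e1 : Equ n (yv (px g : Fin n → ℝ)) (Y n (extg g)) := equ_of_eqOn (yv_xOf _)
  have e2 : Equ n (Y n (extg g)) (Y n (gc n (yv xv))) := equ_of_eqOn hYeq
  have e3 : Equ n (yv xv) (Y n (gc n (yv xv))) := equ_decode hGx
  exact (e1.trans e2).trans e3.symm

lemma Gmap_injective : Function.Injective (Gmap (n := n)) := by
  intro g g' heq
  rw [Gmap, Gmap, ConnectedComponents.coe_eq_coe] at heq
  have hmem : (⟨px g', px_mem g'⟩ : ↥(complementSet (S0 n))) ∈
      connectedComponent (⟨px g, px_mem g⟩ : ↥(complementSet (S0 n))) := by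
    rw [heq]
    exact mem_connectedComponent
  rw [comp_eq (px_mem g)] at hmem
  have hGsmem : (px g' : Fin n → ℝ) ∈ Gs (px g : Fin n → ℝ) := hmem
  have hd := (mem_Gs_iff_dat (px_mem g) (px_mem g')).1 hGsmem
  have hEqu := (dat_eq_iff (good_px g') (good_px g)).1 hd
  have hEqu2 : Equ n (Y n (extg g')) (Y n (extg g)) :=
    (((equ_of_eqOn (yv_xOf (Y n (extg g')))).symm.trans hEqu).trans
      (equ_of_eqOn (yv_xOf (Y n (extg g)))))
  funext a
  have ha := a.isLt
  have h1 : 1 ≤ (a:ℕ)+1 := by omega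
  have h2 : (a:ℕ)+1 < n := by omega
  have hgc := gc_congr (Y_good (extg_le g')) (Y_good (extg_le g)) hEqu2 h1 h2
  rw [gc_Y (extg_le g') h1 h2, gc_Y (extg_le g) h1 h2] at hgc
  rw [extg, extg, dif_pos ⟨h1, h2⟩, dif_pos ⟨h1, h2⟩] at hgc
  apply Fin.ext
  have hee : (⟨(a:ℕ)+1-1, by omega⟩ : Fin (n-1)) = a := Fin.ext (by simp)
  rw [hee] at hgc
  exact hgc.symm

end Assembly

end Statement15


/-- the number of regions of the `n`-dimensional Ish arrangement
(with `S_{1,j} = {0, 1, …, j-1}` and `S_{i,j} = {0}` for `1 < i < j`) is the Cayley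
number `(n+1)^(n-1)`. (The label `j` corresponds to the index `j - 1 : Fin n`, so
`S_{1,j} = Finset.Icc 0 (j-1)`.) -/


theorem statement_15 {n : ℕ} (hn : 1 ≤ n) :
    numRegions (fun i j : Fin n =>
      if (i : ℕ) = 0 then Finset.Icc (0 : ℤ) ((j : ℕ) : ℤ) else {0}) =
    (n + 1) ^ (n - 1) := by
  haveI : NeZero n := ⟨by omega⟩
  have hS : (fun i j : Fin n =>
      if (i : ℕ) = 0 then Finset.Icc (0 : ℤ) ((j : ℕ) : ℤ) else ({0} : Finset ℤ)) =
      Statement15.S0 n := rfl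
  rw [hS, numRegions,
    ← Nat.card_eq_of_bijective _ ⟨Statement15.Gmap_injective, Statement15.Gmap_surjective⟩,
    Nat.card_eq_fintype_card, Fintype.card_fun, Fintype.card_fin, Fintype.card_fin]
end

section
/- Suppose the tuple S is transitive and let T ∈ T^(m)(n). Then no two distinct maximal S-cadet sequences of T intersect; that is, maximal S-cadet sequences and S-connected cadet sequences of T coincide. -/
open scoped Classical

namespace PlaneTree



variable {n m : ℕ} (T : PlaneTree n m)

/-! ### Basic facts about cadets and depth -/

theorem cadet_unique {u v v' : Fin n} (h : T.IsCadet u v) (h' : T.IsCadet u v') : v = v' := by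
  have h1 := h.2 v' h'.1
  have h2 := h'.2 v h.1
  exact T.pos_inj v v' h.1.1 h'.1.1 (h.1.2.trans h'.1.2.symm) (le_antisymm h2 h1)

theorem cadet_parent {u v : Fin n} (h : T.IsCadet u v) : T.parent v = u := h.1.2

noncomputable def depth (v : Fin n) : ℕ := Nat.find (T.reaches_root v)

theorem depth_spec (v : Fin n) : T.parent^[T.depth v] v = T.root :=
  Nat.find_spec (T.reaches_root v)

theorem depth_root : T.depth T.root = 0 := by
  have : T.parent^[0] T.root = T.root := rfl
  exact Nat.le_zero.1 (Nat.find_le this)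

theorem eq_root_of_depth_eq_zero {v : Fin n} (h : T.depth v = 0) : v = T.root := by
  have := T.depth_spec v
  rwa [h] at this

theorem depth_parent {v : Fin n} (hv : v ≠ T.root) :
    T.depth v = T.depth (T.parent v) + 1 := by
  have h1 : 1 ≤ T.depth v := by
    rcases Nat.eq_zero_or_pos (T.depth v) with h | h
    · exact absurd (T.eq_root_of_depth_eq_zero h) hv
    · exact h
  have hs : T.parent^[T.depth v - 1] (T.parent v) = T.root := by
    have := T.depth_spec v
    rwa [show T.depth v = (T.depth v - 1) + 1 by omega, Function.iterate_succ_apply] at this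
  have h2 : T.depth (T.parent v) ≤ T.depth v - 1 := Nat.find_le hs
  have h3 : T.depth v ≤ T.depth (T.parent v) + 1 := by
    apply Nat.find_le
    rw [Function.iterate_succ_apply]
    exact T.depth_spec (T.parent v)
  omega

theorem depth_child {u v : Fin n} (h : T.IsChild v u) : T.depth v = T.depth u + 1 := by
  have := T.depth_parent h.1
  rwa [h.2] at this

theorem depth_cadet {u v : Fin n} (h : T.IsCadet u v) : T.depth v = T.depth u + 1 :=
  T.depth_child h.1

theorem depth_iterate {v : Fin n} : ∀ i, i ≤ T.depth v → T.depth (T.parent^[i] v) + i = T.depth v := by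
  intro i
  induction i with
  | zero => simp
  | succ i ih =>
    intro hi
    have hIH := ih (by omega)
    have hne : T.parent^[i] v ≠ T.root := by
      intro hr
      have : T.depth (T.parent^[i] v) = 0 := by rw [hr]; exact T.depth_root
      omega
    have := T.depth_parent hne
    rw [Function.iterate_succ_apply']
    omega

theorem depth_lt (v : Fin n) : T.depth v < n := by
  have hinj : Function.Injective (fun i : Fin (T.depth v + 1) => T.parent^[(i : ℕ)] v) := by
    intro i j hij
    have hi := T.depth_iterate (v := v) i (by omega)
    have hj := T.depth_iterate (v := v) j (by omega)
    simp only at hij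
    rw [hij] at hi
    exact Fin.ext (by omega)
  have := Fintype.card_le_of_injective _ hinj
  simpa using this

theorem exists_cadet_of_child {u c : Fin n} (hc : T.IsChild c u) : ∃ v, T.IsCadet u v := by
  classical
  have hne : (Finset.univ.filter fun w => T.IsChild w u).Nonempty :=
    ⟨c, by simp [hc]⟩
  obtain ⟨v, hv, hmax⟩ := Finset.exists_max_image _ (fun w => T.pos w) hne
  refine ⟨v, by simpa using hv, fun w hw => hmax w (by simp [hw])⟩

end PlaneTree
namespace StP

open PlaneTree Finset

variable {n m : ℕ} {T : PlaneTree n m} {S : Fin n → Fin n → Finset ℤ} {v w : ℕ → Fin n}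

/-! ### Window lemmas -/

theorem window_depth {a b : ℕ} (h : IsCadetWindow T v a b) :
    ∀ p, a ≤ p → p ≤ b → T.depth (v p) = T.depth (v a) + (p - a) := by
  have key : ∀ i, a + i ≤ b → T.depth (v (a + i)) = T.depth (v a) + i := by
    intro i
    induction i with
    | zero => simp
    | succ i ih =>
      intro hi
      have h1 := ih (by omega)
      have h2 := T.depth_cadet (h.2.2 (a + i + 1) (by omega) (by omega))
      have : a + i + 1 - 1 = a + i := by omega
      rw [this] at h2
      rw [show a + (i + 1) = a + i + 1 by omega]
      omega
  intro p hp hpb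
  have := key (p - a) (by omega)
  rw [show a + (p - a) = p by omega] at this
  rw [this]

theorem window_inj {a b : ℕ} (h : IsCadetWindow T v a b) : WindowInj v a b := by
  intro p q hp hpb hq hqb hvp
  have h1 := window_depth h p hp hpb
  have h2 := window_depth h q hq hqb
  rw [hvp] at h1
  omega

theorem window_sub {a b a' b' : ℕ} (h : IsCadetWindow T v a b)
    (h1 : a ≤ a') (h2 : a' ≤ b') (h3 : b' ≤ b) : IsCadetWindow T v a' b' :=
  ⟨le_trans h.1 h1, h2, fun p hp hpb => h.2.2 p (by omega) (by omega)⟩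

theorem swindow_sub {a b a' b' : ℕ} (h : IsSCadetWindow S T v a b)
    (h1 : a ≤ a') (h2 : a' ≤ b') (h3 : b' ≤ b) : IsSCadetWindow S T v a' b' :=
  ⟨window_sub h.1 h1 h2 h3, fun i j hi hij hj => h.2 i j (by omega) hij (by omega)⟩

theorem swindow_self {p : ℕ} (hp : 1 ≤ p) : IsSCadetWindow S T v p p :=
  ⟨⟨hp, le_refl _, fun q h1 h2 => by omega⟩, fun i j hi hij hj => by omega⟩

theorem lsib_sum_split (i c j : ℕ) (h1 : i ≤ c) (h2 : c ≤ j) :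
    (∑ p ∈ Finset.Icc (i + 1) j, T.lsib (v p)) =
    (∑ p ∈ Finset.Icc (i + 1) c, T.lsib (v p)) + ∑ p ∈ Finset.Icc (c + 1) j, T.lsib (v p) := by
  rw [Finset.Icc_add_one_left_eq_Ioc, Finset.Icc_add_one_left_eq_Ioc, Finset.Icc_add_one_left_eq_Ioc,
    Finset.sum_Ioc_consecutive _ h1 h2]

theorem glue (hS : TransitiveS S) {k a c b : ℕ} (hk : IsCadetWindow T v 1 k)
    (ha : a ≤ c) (hc : c ≤ b) (hb : b ≤ k)
    (h1 : IsSCadetWindow S T v a c) (h2 : IsSCadetWindow S T v c b) :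
    IsSCadetWindow S T v a b := by
  have hinj := window_inj hk
  have ha1 : 1 ≤ a := h1.1.1
  refine ⟨⟨ha1, by omega, fun p hp hpb => ?_⟩, fun i j hi hij hj => ?_⟩
  · rcases le_or_gt p c with h | h
    · exact h1.1.2.2 p hp h
    · exact h2.1.2.2 p h hpb
  · rcases le_or_gt j c with h | h
    · exact h1.2 i j hi hij h
    rcases le_or_gt c i with h' | h'
    · exact h2.2 i j h' hij hj
    -- i < c < j
    rw [lsib_sum_split i c j (by omega) (by omega)]
    have hij1 : v i ≠ v c := fun e => by
      have := hinj i c (by omega) (by omega) (by omega) (by omega) e; omega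
    have hij2 : v c ≠ v j := fun e => by
      have := hinj c j (by omega) (by omega) (by omega) (by omega) e; omega
    have hij3 : v i ≠ v j := fun e => by
      have := hinj i j (by omega) (by omega) (by omega) (by omega) e; omega
    exact hS (v i) (v c) (v j) hij1 hij2 hij3 _ _
      (h1.2 i c hi h' (le_refl _)) (h2.2 c j (le_refl _) h hj)

/-! ### Maximal S-windows -/

theorem maxw_eq (hS : TransitiveS S) {k a b a' b' c : ℕ} (hk : IsCadetWindow T v 1 k)
    (hm : IsMaxSCadetWindow S T k v a b) (hm' : IsMaxSCadetWindow S T k v a' b')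
    (hac : a ≤ c) (hcb : c ≤ b) (hac' : a' ≤ c) (hcb' : c ≤ b') : a = a' ∧ b = b' := by
  have step : ∀ a b a' b' : ℕ, IsMaxSCadetWindow S T k v a b →
      IsMaxSCadetWindow S T k v a' b' → a ≤ c → c ≤ b → a' ≤ c → c ≤ b' → a ≤ a' := by
    intro a b a' b' hm hm' hac hcb hac' hcb'
    by_contra hlt
    push_neg at hlt
    have ha'1 : 1 ≤ a' := hm'.2.1.1.1
    have hW : IsSCadetWindow S T v a' b :=
      glue hS hk hac' hcb hm.1 (swindow_sub hm'.2.1 (le_refl _) hac' hcb') (swindow_sub hm.2.1 hac hcb (le_refl _))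
    have hW2 : IsSCadetWindow S T v (a - 1) b := swindow_sub hW (by omega) (by omega) (le_refl _)
    rcases hm.2.2.1 with h | h
    · omega
    · exact h hW2
  have step2 : ∀ a b a' b' : ℕ, IsMaxSCadetWindow S T k v a b →
      IsMaxSCadetWindow S T k v a' b' → a ≤ c → c ≤ b → a' ≤ c → c ≤ b' → b' ≤ b := by
    intro a b a' b' hm hm' hac hcb hac' hcb'
    by_contra hlt
    push_neg at hlt
    have hbk : b' ≤ k := hm'.1
    have hW : IsSCadetWindow S T v a b' :=
      glue hS hk hac hcb' hm'.1 (swindow_sub hm.2.1 (le_refl _) hac hcb)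
        (swindow_sub hm'.2.1 hac' hcb' (le_refl _))
    have hW2 : IsSCadetWindow S T v a (b + 1) := swindow_sub hW (le_refl _) (by omega) (by omega)
    rcases hm.2.2.2 with h | h
    · omega
    · exact h hW2
  exact ⟨le_antisymm (step a b a' b' hm hm' hac hcb hac' hcb')
      (step a' b' a b hm' hm hac' hcb' hac hcb),
    le_antisymm (step2 a' b' a b hm' hm hac' hcb' hac hcb)
      (step2 a b a' b' hm hm' hac hcb hac' hcb')⟩

theorem exists_maxw {t : ℕ}
    {p : ℕ} (hp1 : 1 ≤ p) (hpt : p ≤ t) :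
    ∃ a b, IsMaxSCadetWindow S T t v a b ∧ a ≤ p ∧ p ≤ b := by
  classical
  set G : Finset (ℕ × ℕ) := (Finset.Icc 1 p ×ˢ Finset.Icc p t).filter
    (fun q => IsSCadetWindow S T v q.1 q.2) with hG
  have hne : G.Nonempty := ⟨(p, p), by
    simp only [hG, Finset.mem_filter, Finset.mem_product, Finset.mem_Icc]
    exact ⟨⟨⟨hp1, le_refl _⟩, ⟨le_refl _, hpt⟩⟩, swindow_self hp1⟩⟩
  obtain ⟨q, hq, hmax⟩ := Finset.exists_max_image G (fun q => q.2 - q.1) hne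
  simp only [hG, Finset.mem_filter, Finset.mem_product, Finset.mem_Icc] at hq
  obtain ⟨⟨⟨hq1, hqp⟩, hpq, hqt⟩, hqw⟩ := hq
  refine ⟨q.1, q.2, ⟨hqt, hqw, ?_, ?_⟩, hqp, hpq⟩
  · rcases Nat.eq_or_lt_of_le hq1 with h | h
    · exact Or.inl h.symm
    · refine Or.inr fun hW => ?_
      have hmem : (q.1 - 1, q.2) ∈ G := by
        simp only [hG, Finset.mem_filter, Finset.mem_product, Finset.mem_Icc]
        exact ⟨⟨⟨by omega, by omega⟩, hpq, hqt⟩, hW⟩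
      have := hmax _ hmem
      simp only at this
      omega
  · rcases Nat.eq_or_lt_of_le hqt with h | h
    · exact Or.inl h
    · refine Or.inr fun hW => ?_
      have hmem : (q.1, q.2 + 1) ∈ G := by
        simp only [hG, Finset.mem_filter, Finset.mem_product, Finset.mem_Icc]
        exact ⟨⟨⟨hq1, hqp⟩, by omega, by omega⟩, hW⟩
      have := hmax _ hmem
      simp only at this
      omega

end StP
namespace StP

open PlaneTree Finset

variable {n m : ℕ} {T : PlaneTree n m} {S : Fin n → Fin n → Finset ℤ} {v v' : ℕ → Fin n}

/-! ### Uniqueness of the ambient maximal cadet sequence -/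

theorem maxseq_back {k k' p q : ℕ} (h : IsMaxCadetSeq T k v) (h' : IsMaxCadetSeq T k' v')
    (hp1 : 1 ≤ p) (hpk : p ≤ k) (hq1 : 1 ≤ q) (hqk : q ≤ k') (he : v p = v' q) :
    ∀ i, i < p → i < q ∧ v (p - i) = v' (q - i) := by
  intro i
  induction i with
  | zero => exact fun _ => ⟨hq1, by simpa using he⟩
  | succ i ih =>
    intro hip
    obtain ⟨hiq, hval⟩ := ih (by omega)
    have hcad : T.IsCadet (v (p - i - 1)) (v (p - i)) := by
      have := h.1.2.2 (p - i) (by omega) (by omega)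
      rwa [show p - i - 1 = p - i - 1 from rfl]
    have hiq2 : i + 1 < q := by
      by_contra hq
      have hqi : q - i = 1 := by omega
      rw [hval, hqi] at hcad
      exact h'.2.2 _ hcad
    have hcad' : T.IsCadet (v' (q - i - 1)) (v' (q - i)) := by
      have := h'.1.2.2 (q - i) (by omega) (by omega)
      exact this
    have hpar : v (p - i - 1) = v' (q - i - 1) := by
      have e1 := cadet_parent T hcad
      have e2 := cadet_parent T hcad'
      rw [hval] at e1
      rw [e1] at e2
      exact e2
    refine ⟨hiq2, ?_⟩
    rw [show p - (i + 1) = p - i - 1 by omega, show q - (i + 1) = q - i - 1 by omega]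
    exact hpar

theorem maxseq_fwd {k k' p q : ℕ} (h : IsMaxCadetSeq T k v) (h' : IsMaxCadetSeq T k' v')
    (hp1 : 1 ≤ p) (hq1 : 1 ≤ q) (hqk : q ≤ k') (he : v p = v' q) :
    ∀ i, p + i ≤ k → q + i ≤ k' ∧ v (p + i) = v' (q + i) := by
  intro i
  induction i with
  | zero => exact fun _ => ⟨by omega, by simpa using he⟩
  | succ i ih =>
    intro hik
    obtain ⟨hiq, hval⟩ := ih (by omega)
    have hcad : T.IsCadet (v (p + i)) (v (p + i + 1)) := by
      have := h.1.2.2 (p + i + 1) (by omega) (by omega)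
      rwa [show p + i + 1 - 1 = p + i by omega] at this
    have hqi : q + i < k' := by
      rcases Nat.lt_or_ge (q + i) k' with hlt | hge
      · exact hlt
      have hqi' : q + i = k' := by omega
      exfalso
      apply h'.2.1 (v (p + i + 1))
      rw [← hqi', ← hval]
      exact hcad.1
    have hcad' : T.IsCadet (v' (q + i)) (v' (q + i + 1)) := by
      have := h'.1.2.2 (q + i + 1) (by omega) (by omega)
      rwa [show q + i + 1 - 1 = q + i by omega] at this
    rw [hval] at hcad
    refine ⟨by omega, ?_⟩
    rw [show p + (i + 1) = p + i + 1 by omega, show q + (i + 1) = q + i + 1 by omega]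
    exact cadet_unique T hcad hcad'

theorem maxseq_unique {k k' p q : ℕ} (h : IsMaxCadetSeq T k v) (h' : IsMaxCadetSeq T k' v')
    (hp1 : 1 ≤ p) (hpk : p ≤ k) (hq1 : 1 ≤ q) (hqk : q ≤ k') (he : v p = v' q) :
    p = q ∧ k = k' ∧ ∀ r, 1 ≤ r → r ≤ k → v r = v' r := by
  have hpq : p = q := by
    have h1 := (maxseq_back h h' hp1 hpk hq1 hqk he (p - 1) (by omega)).1
    have h2 := (maxseq_back h' h hq1 hqk hp1 hpk he.symm (q - 1) (by omega)).1
    omega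
  subst hpq
  have hkk : k = k' := by
    have h1 := (maxseq_fwd h h' hp1 hq1 hqk he (k - p) (by omega)).1
    have h2 := (maxseq_fwd h' h hq1 hp1 hpk he.symm (k' - p) (by omega)).1
    omega
  refine ⟨rfl, hkk, fun r hr1 hrk => ?_⟩
  rcases le_or_gt p r with hle | hlt
  · have := (maxseq_fwd h h' hp1 hq1 hqk he (r - p) (by omega)).2
    rwa [show p + (r - p) = r by omega] at this
  · have := (maxseq_back h h' hp1 hpk hq1 hqk he (p - r) (by omega)).2
    rwa [show p - (p - r) = r by omega] at this

end StP
namespace StP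

open PlaneTree Finset

variable {n m : ℕ} {S : Fin n → Fin n → Finset ℤ} {v : ℕ → Fin n}

noncomputable def fnext (T : PlaneTree n m) (u : Fin n) : Fin n :=
  if h : ∃ x, T.IsCadet u x then h.choose else u

noncomputable def gprev (T : PlaneTree n m) (u : Fin n) : Fin n :=
  if h : ∃ x, T.IsCadet x u then h.choose else u

variable {T : PlaneTree n m}

theorem fnext_spec {u : Fin n} (h : ∃ x, T.IsCadet u x) : T.IsCadet u (fnext T u) := by
  rw [fnext, dif_pos h]; exact h.choose_spec

theorem fnext_of_not {u : Fin n} (h : ¬∃ x, T.IsCadet u x) : fnext T u = u := by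
  rw [fnext, dif_neg h]

theorem fnext_ne {u : Fin n} (h : ∃ x, T.IsCadet u x) : fnext T u ≠ u := by
  intro he
  have := T.depth_cadet (fnext_spec h)
  rw [he] at this
  omega

theorem not_exists_of_fnext_eq {u : Fin n} (h : fnext T u = u) : ¬∃ x, T.IsCadet u x :=
  fun hx => fnext_ne hx h

theorem gprev_spec {u : Fin n} (h : ∃ x, T.IsCadet x u) : T.IsCadet (gprev T u) u := by
  rw [gprev, dif_pos h]; exact h.choose_spec

theorem gprev_ne {u : Fin n} (h : ∃ x, T.IsCadet x u) : gprev T u ≠ u := by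
  intro he
  have := T.depth_cadet (gprev_spec h)
  rw [he] at this
  omega

theorem not_exists_of_gprev_eq {u : Fin n} (h : gprev T u = u) : ¬∃ x, T.IsCadet x u :=
  fun hx => gprev_ne hx h

theorem exists_of_gprev_ne {u : Fin n} (h : gprev T u ≠ u) : ∃ x, T.IsCadet x u := by
  by_contra hx
  rw [gprev, dif_neg hx] at h
  exact h rfl

theorem exists_of_fnext_ne {u : Fin n} (h : fnext T u ≠ u) : ∃ x, T.IsCadet u x := by
  by_contra hx
  rw [fnext, dif_neg hx] at h
  exact h rfl

theorem fnext_gprev {u : Fin n} (h : ∃ x, T.IsCadet x u) : fnext T (gprev T u) = u := by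
  have h1 := gprev_spec h
  have h2 := fnext_spec ⟨u, h1⟩
  exact cadet_unique T h2 h1

theorem gprev_term (T : PlaneTree n m) (x : Fin n) :
    ∃ i, gprev T ((gprev T)^[i] x) = (gprev T)^[i] x := by
  by_contra hc
  push_neg at hc
  have key : ∀ j, T.depth ((gprev T)^[j] x) + j ≤ T.depth x := by
    intro j
    induction j with
    | zero => simp
    | succ j ih =>
      have hne := hc j
      have hex := exists_of_gprev_ne hne
      have hcad := gprev_spec hex
      have := T.depth_cadet hcad
      rw [Function.iterate_succ_apply']
      omega
  have := key (T.depth x + 1)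
  omega

theorem fnext_term (T : PlaneTree n m) (x : Fin n) :
    ∃ i, fnext T ((fnext T)^[i] x) = (fnext T)^[i] x := by
  by_contra hc
  push_neg at hc
  have key : ∀ j, T.depth x + j ≤ T.depth ((fnext T)^[j] x) := by
    intro j
    induction j with
    | zero => simp
    | succ j ih =>
      have hne := hc j
      have hex := exists_of_fnext_ne hne
      have hcad := fnext_spec hex
      have := T.depth_cadet hcad
      rw [Function.iterate_succ_apply']
      omega
  have h1 := key n
  have h2 := T.depth_lt ((fnext T)^[n] x)
  omega

theorem exists_ambient {k : ℕ} (hw : IsCadetWindow T v 1 k) :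
    ∃ (t : ℕ) (w : ℕ → Fin n) (d : ℕ), IsMaxCadetSeq T t w ∧ d + k ≤ t ∧
      ∀ i, 1 ≤ i → i ≤ k → w (d + i) = v i := by
  classical
  set x := v 1 with hx
  set d := Nat.find (gprev_term T x) with hd
  set r := (gprev T)^[d] x with hr
  set t' := Nat.find (fnext_term T r) with ht'
  set w : ℕ → Fin n := fun p => (fnext T)^[p - 1] r with hwdef
  have hgfix : gprev T r = r := Nat.find_spec (gprev_term T x)
  have hffix : fnext T ((fnext T)^[t'] r) = (fnext T)^[t'] r := Nat.find_spec (fnext_term T r)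
  have hgne : ∀ i, i < d → gprev T ((gprev T)^[i] x) ≠ (gprev T)^[i] x :=
    fun i hi => Nat.find_min (gprev_term T x) hi
  have hfne : ∀ i, i < t' → fnext T ((fnext T)^[i] r) ≠ (fnext T)^[i] r :=
    fun i hi => Nat.find_min (fnext_term T r) hi
  -- f inverts g along the chain
  have hfg : ∀ i j, i + j ≤ d → (fnext T)^[i] ((gprev T)^[i + j] x) = (gprev T)^[j] x := by
    intro i
    induction i with
    | zero => intro j _; simp
    | succ i ih =>
      intro j hij
      have h1 : (gprev T)^[i + 1 + j] x = gprev T ((gprev T)^[i + j] x) := by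
        rw [show i + 1 + j = (i + j) + 1 by omega, Function.iterate_succ_apply']
      have hne := hgne (i + j) (by omega)
      have hex := exists_of_gprev_ne hne
      calc (fnext T)^[i + 1] ((gprev T)^[i + 1 + j] x)
          = (fnext T)^[i] (fnext T ((gprev T)^[i + 1 + j] x)) := by
            rw [Function.iterate_succ_apply]
        _ = (fnext T)^[i] ((gprev T)^[i + j] x) := by rw [h1, fnext_gprev hex]
        _ = (gprev T)^[j] x := ih j (by omega)
  have hfr : ∀ j, j ≤ d → (fnext T)^[j] r = (gprev T)^[d - j] x := by
    intro j hj
    have := hfg j (d - j) (by omega)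
    rwa [show j + (d - j) = d by omega] at this
  have hfdr : (fnext T)^[d] r = x := by
    have := hfr d (le_refl _)
    simpa using this
  -- pre-chain indices have cadets
  have hpre : ∀ j, j < d → fnext T ((fnext T)^[j] r) ≠ (fnext T)^[j] r := by
    intro j hj
    have he1 : (fnext T)^[j] r = (gprev T)^[d - j] x := hfr j (by omega)
    have h2 : (gprev T)^[d - j] x = gprev T ((gprev T)^[d - j - 1] x) := by
      rw [show d - j = (d - j - 1) + 1 by omega, Function.iterate_succ_apply']
      norm_num
    have hne := hgne (d - j - 1) (by omega)
    have hex := exists_of_gprev_ne hne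
    have hcad : T.IsCadet ((gprev T)^[d - j] x) ((gprev T)^[d - j - 1] x) := by
      rw [h2]; exact gprev_spec hex
    rw [he1]
    exact fnext_ne ⟨_, hcad⟩
  -- the embedded window
  have hemb : ∀ i, i < k → w (d + i + 1) = v (i + 1) := by
    intro i
    induction i with
    | zero =>
      intro _
      show (fnext T)^[d + 0 + 1 - 1] r = v 1
      simpa using hfdr
    | succ i ih =>
      intro hik
      have hprev := ih (by omega)
      have hcad : T.IsCadet (v (i + 1)) (v (i + 2)) := by
        have := hw.2.2 (i + 2) (by omega) (by omega)
        rwa [show i + 2 - 1 = i + 1 by omega] at this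
      have hstep : w (d + (i + 1) + 1) = fnext T (w (d + i + 1)) := by
        show (fnext T)^[d + (i + 1) + 1 - 1] r = fnext T ((fnext T)^[d + i + 1 - 1] r)
        rw [show d + (i + 1) + 1 - 1 = (d + i + 1 - 1) + 1 by omega,
          Function.iterate_succ_apply']
      rw [hstep, hprev]
      exact cadet_unique T (fnext_spec ⟨_, hcad⟩) hcad
  -- window-chain indices have cadets
  have hmid : ∀ j, j < d + k - 1 → fnext T ((fnext T)^[j] r) ≠ (fnext T)^[j] r := by
    intro j hj
    rcases Nat.lt_or_ge j d with h | h
    · exact hpre j h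
    · have hwj : (fnext T)^[j] r = v (j - d + 1) := by
        have h0 := hemb (j - d) (by omega)
        rw [show d + (j - d) + 1 = j + 1 by omega] at h0
        exact h0
      have hcad : T.IsCadet (v (j - d + 1)) (v (j - d + 2)) := by
        have := hw.2.2 (j - d + 2) (by omega) (by omega)
        rwa [show j - d + 2 - 1 = j - d + 1 by omega] at this
      rw [hwj]
      exact fnext_ne ⟨_, hcad⟩
  have htlb : d + k ≤ t' + 1 := by
    by_contra hc
    push_neg at hc
    exact hmid t' (by omega) hffix
  refine ⟨t' + 1, w, d, ⟨⟨le_refl _, by omega, fun p hp1 hpt => ?_⟩, ?_, ?_⟩, htlb,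
    fun i hi1 hik => ?_⟩
  · -- cadet window condition
    have h1 : w p = fnext T (w (p - 1)) := by
      show (fnext T)^[p - 1] r = fnext T ((fnext T)^[p - 1 - 1] r)
      rw [show p - 1 = (p - 1 - 1) + 1 by omega, Function.iterate_succ_apply']
      norm_num
    have hne := hfne (p - 1 - 1) (by omega)
    have hex := exists_of_fnext_ne hne
    have := fnext_spec hex
    rw [h1]
    exact this
  · -- leaves at the end
    intro c hc
    have : w (t' + 1) = (fnext T)^[t'] r := by
      show (fnext T)^[t' + 1 - 1] r = _
      rw [show t' + 1 - 1 = t' by omega]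
    rw [this] at hc
    exact absurd (exists_cadet_of_child T hc) (not_exists_of_fnext_eq hffix)
  · -- no cadet-parent of the start
    intro u hu
    have hw1 : w 1 = r := by show (fnext T)^[1 - 1] r = r; simp
    rw [hw1] at hu
    exact absurd ⟨u, hu⟩ (not_exists_of_gprev_eq hgfix)
  · have := hemb (i - 1) (by omega)
    rwa [show d + (i - 1) + 1 = d + i by omega, show i - 1 + 1 = i by omega] at this

end StP
namespace StP

open PlaneTree Finset

variable {n m : ℕ} {T : PlaneTree n m} {S : Fin n → Fin n → Finset ℤ} {v v' : ℕ → Fin n}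

/-! ### Transfer lemmas -/

theorem window_congr {a b : ℕ} (hvv : ∀ p, a ≤ p → p ≤ b → v p = v' p)
    (h : IsCadetWindow T v a b) : IsCadetWindow T v' a b := by
  refine ⟨h.1, h.2.1, fun p hp hpb => ?_⟩
  rw [← hvv p (by omega) hpb, ← hvv (p - 1) (by omega) (by omega)]
  exact h.2.2 p hp hpb

theorem swindow_congr {a b : ℕ} (hvv : ∀ p, a ≤ p → p ≤ b → v p = v' p)
    (h : IsSCadetWindow S T v a b) : IsSCadetWindow S T v' a b := by
  refine ⟨window_congr hvv h.1, fun i j hi hij hj => ?_⟩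
  have hsum : (∑ p ∈ Finset.Icc (i + 1) j, T.lsib (v' p)) =
      ∑ p ∈ Finset.Icc (i + 1) j, T.lsib (v p) := by
    apply Finset.sum_congr rfl
    intro p hp
    rw [Finset.mem_Icc] at hp
    rw [hvv p (by omega) (by omega)]
  rw [hsum, ← hvv i hi (by omega), ← hvv j (by omega) hj]
  exact h.2 i j hi hij hj

theorem maxw_congr {k a b : ℕ} (hvv : ∀ p, 1 ≤ p → p ≤ k → v p = v' p)
    (h : IsMaxSCadetWindow S T k v a b) : IsMaxSCadetWindow S T k v' a b := by
  obtain ⟨hbk, hsw, hleft, hright⟩ := h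
  have ha1 : 1 ≤ a := hsw.1.1
  have hab : a ≤ b := hsw.1.2.1
  refine ⟨hbk, swindow_congr (fun p hp hpb => hvv p (by omega) (by omega)) hsw, ?_, ?_⟩
  · rcases Nat.eq_or_lt_of_le ha1 with he | ha2
    · exact Or.inl he.symm
    · rcases hleft with h | h
      · exact Or.inl h
      · exact Or.inr fun hW =>
          h (swindow_congr (fun p hp hpb => (hvv p (by omega) (by omega)).symm) hW)
  · rcases Nat.eq_or_lt_of_le hbk with he | hbk2
    · exact Or.inl he
    · rcases hright with h | h
      · exact Or.inl h
      · exact Or.inr fun hW =>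
          h (swindow_congr (fun p hp hpb => (hvv p (by omega) (by omega)).symm) hW)

theorem mem_image_Icc {a b : ℕ} {u : Fin n} :
    u ∈ (Finset.Icc a b).image v ↔ ∃ p, a ≤ p ∧ p ≤ b ∧ v p = u := by
  simp only [Finset.mem_image, Finset.mem_Icc]
  constructor
  · rintro ⟨p, ⟨h1, h2⟩, h3⟩; exact ⟨p, h1, h2, h3⟩
  · rintro ⟨p, h1, h2, h3⟩; exact ⟨p, ⟨h1, h2⟩, h3⟩

theorem image_Icc_congr {a b : ℕ} (hvv : ∀ p, a ≤ p → p ≤ b → v p = v' p) :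
    (Finset.Icc a b).image v = (Finset.Icc a b).image v' := by
  apply Finset.image_congr
  intro p hp
  rw [Finset.mem_coe, Finset.mem_Icc] at hp
  exact hvv p hp.1 hp.2

theorem maxset_window {Y : Finset (Fin n)} {t p : ℕ} {w : ℕ → Fin n} {u : Fin n}
    (hY : IsMaxSCadetSet S T Y) (hamb : IsMaxCadetSeq T t w)
    (huY : u ∈ Y) (hup : u = w p) (hp1 : 1 ≤ p) (hpt : p ≤ t) :
    ∃ a b, IsMaxSCadetWindow S T t w a b ∧ a ≤ p ∧ p ≤ b ∧
      Y = (Finset.Icc a b).image w := by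
  obtain ⟨k', v', a', b', hseq', hinj', hmax', hYe⟩ := hY
  have ha1 : 1 ≤ a' := hmax'.2.1.1.1
  have hab : a' ≤ b' := hmax'.2.1.1.2.1
  have hbk : b' ≤ k' := hmax'.1
  obtain ⟨q, hq1, hq2, hq3⟩ := mem_image_Icc.1 (hYe ▸ huY)
  have he : v' q = w p := by rw [hq3, hup]
  obtain ⟨hqp, hkk, hval⟩ := maxseq_unique hseq' hamb (by omega) (by omega) hp1 hpt he
  subst hqp
  subst hkk
  refine ⟨a', b', maxw_congr hval hmax', hq1, hq2, ?_⟩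
  rw [hYe]
  exact image_Icc_congr fun r hr1 hr2 => hval r (by omega) (by omega)

theorem seqset_of_window {a b : ℕ} (h : IsCadetWindow T v a b) :
    IsCadetSeqSet T ((Finset.Icc a b).image v) := by
  have ha1 : 1 ≤ a := h.1
  have hab : a ≤ b := h.2.1
  set u : ℕ → Fin n := fun i => v (a + i - 1) with hu
  have hwin : IsCadetWindow T u 1 (b + 1 - a) := by
    refine ⟨le_refl _, by omega, fun p hp hpb => ?_⟩
    have := h.2.2 (a + p - 1) (by omega) (by omega)
    have e1 : u (p - 1) = v (a + p - 1 - 1) := by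
      show v (a + (p - 1) - 1) = v (a + p - 1 - 1)
      rw [show a + (p - 1) - 1 = a + p - 1 - 1 by omega]
    rw [e1]
    exact this
  refine ⟨b + 1 - a, u, hwin, window_inj hwin, ?_⟩
  ext x
  rw [mem_image_Icc, mem_image_Icc]
  constructor
  · rintro ⟨p, h1, h2, h3⟩
    refine ⟨p - a + 1, by omega, by omega, ?_⟩
    show v (a + (p - a + 1) - 1) = x
    rw [show a + (p - a + 1) - 1 = p by omega, h3]
  · rintro ⟨i, h1, h2, h3⟩
    exact ⟨a + i - 1, by omega, by omega, h3⟩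

end StP
namespace StP

open PlaneTree Finset

variable {n m : ℕ} {T : PlaneTree n m} {S : Fin n → Fin n → Finset ℤ}

theorem maxsets_eq (hS : TransitiveS S) {Y Y' : Finset (Fin n)} {u : Fin n}
    (hY : IsMaxSCadetSet S T Y) (hY' : IsMaxSCadetSet S T Y')
    (huY : u ∈ Y) (huY' : u ∈ Y') : Y = Y' := by
  obtain ⟨k, v, a, b, hseq, hinj, hmax, hYe⟩ := hY
  have ha1 : 1 ≤ a := hmax.2.1.1.1
  have hab : a ≤ b := hmax.2.1.1.2.1
  have hbk : b ≤ k := hmax.1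
  obtain ⟨p, hp1, hp2, hp3⟩ := mem_image_Icc.1 (hYe ▸ huY)
  obtain ⟨a', b', hmax', hpa', hpb', hYe'⟩ :=
    maxset_window hY' hseq huY' hp3.symm (by omega) (by omega)
  obtain ⟨heq1, heq2⟩ := maxw_eq hS hseq.1 hmax hmax' hp1 hp2 hpa' hpb'
  rw [hYe, hYe', heq1, heq2]

theorem sconn_of_max (hS : TransitiveS S) {X : Finset (Fin n)}
    (hX : IsMaxSCadetSet S T X) : SConnected S T X := by
  obtain ⟨k, v, a, b, hseq, hinj, hmax, hXe⟩ := hX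
  have hXmax : IsMaxSCadetSet S T X := ⟨k, v, a, b, hseq, hinj, hmax, hXe⟩
  have ha1 : 1 ≤ a := hmax.2.1.1.1
  have hab : a ≤ b := hmax.2.1.1.2.1
  have hbk : b ≤ k := hmax.1
  refine ⟨?_, ?_, ?_⟩
  · rw [hXe]
    exact seqset_of_window (window_sub hseq.1 ha1 hab hbk)
  · intro Y hY
    rcases Finset.eq_empty_or_nonempty (X ∩ Y) with h | ⟨u, hu⟩
    · exact Or.inl h
    · rw [Finset.mem_inter] at hu
      exact Or.inr ((maxsets_eq hS hY hXmax hu.2 hu.1).le)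
  · intro X' hX' hprop hsub
    obtain ⟨k₀, v₀, hw₀, hinj₀, hXe'⟩ := hX'
    have hne : (v₀ 1) ∈ X' := by
      rw [hXe']
      exact mem_image_Icc.2 ⟨1, le_refl _, hw₀.2.1, rfl⟩
    rcases hprop X hXmax with h | h
    · exfalso
      have : v₀ 1 ∈ X' ∩ X := Finset.mem_inter.2 ⟨hne, hsub hne⟩
      rw [h] at this
      exact absurd this (Finset.notMem_empty _)
    · exact le_antisymm hsub h

theorem max_of_sconn (hS : TransitiveS S) {X : Finset (Fin n)}
    (hX : SConnected S T X) : IsMaxSCadetSet S T X := by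
  obtain ⟨⟨k₀, v₀, hw₀, hinj₀, hXe⟩, hcond1, hcond2⟩ := hX
  have hk₀ : 1 ≤ k₀ := hw₀.2.1
  obtain ⟨t, w, d, hmaxseq, hdk, hval⟩ := exists_ambient hw₀
  have ht : IsCadetWindow T w 1 t := hmaxseq.1
  have hwinj := window_inj ht
  set a := d + 1 with hadef
  set b := d + k₀ with hbdef
  have hXw : X = (Finset.Icc a b).image w := by
    rw [hXe]
    ext x
    rw [mem_image_Icc, mem_image_Icc]
    constructor
    · rintro ⟨i, h1, h2, h3⟩
      exact ⟨d + i, by omega, by omega, by rw [hval i h1 h2, h3]⟩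
    · rintro ⟨p, h1, h2, h3⟩
      exact ⟨p - d, by omega, by omega, by rw [← hval (p - d) (by omega) (by omega),
        show d + (p - d) = p by omega, h3]⟩
  obtain ⟨a₁, b₁, hm₁, ha₁, hb₁⟩ := exists_maxw (S := S) (T := T) (v := w) (t := t)
    (show 1 ≤ a by omega) (show a ≤ t by omega)
  have ha₁1 : 1 ≤ a₁ := hm₁.2.1.1.1
  have ha₁b₁ : a₁ ≤ b₁ := hm₁.2.1.1.2.1
  have hb₁t : b₁ ≤ t := hm₁.1
  set Y₁ : Finset (Fin n) := (Finset.Icc a₁ b₁).image w with hY₁def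
  have hY₁max : IsMaxSCadetSet S T Y₁ := ⟨t, w, a₁, b₁, hmaxseq, hwinj, hm₁, rfl⟩
  have hwaX : w a ∈ X := by
    rw [hXw]; exact mem_image_Icc.2 ⟨a, le_refl _, by omega, rfl⟩
  have hwaY : w a ∈ Y₁ := mem_image_Icc.2 ⟨a, ha₁, hb₁, rfl⟩
  have hY₁X : Y₁ ⊆ X := by
    rcases hcond1 Y₁ hY₁max with h | h
    · exfalso
      have : w a ∈ X ∩ Y₁ := Finset.mem_inter.2 ⟨hwaX, hwaY⟩
      rw [h] at this
      exact absurd this (Finset.notMem_empty _)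
    · exact h
  have hprop : ∀ Y, IsMaxSCadetSet S T Y → Y₁ ∩ Y = ∅ ∨ Y ⊆ Y₁ := by
    intro Y hY
    rcases Finset.eq_empty_or_nonempty (Y₁ ∩ Y) with h | ⟨u, hu⟩
    · exact Or.inl h
    · rw [Finset.mem_inter] at hu
      exact Or.inr ((maxsets_eq hS hY hY₁max hu.2 hu.1).le)
  have hseqset : IsCadetSeqSet T Y₁ := seqset_of_window (window_sub ht ha₁1 ha₁b₁ hb₁t)
  have hY₁eq : Y₁ = X := hcond2 Y₁ hseqset hprop hY₁X
  -- deduce interval equality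
  have hsub1 : ∀ p, a₁ ≤ p → p ≤ b₁ → a ≤ p ∧ p ≤ b := by
    intro p hp1 hp2
    have : w p ∈ X := by
      rw [← hY₁eq]
      exact mem_image_Icc.2 ⟨p, hp1, hp2, rfl⟩
    rw [hXw] at this
    obtain ⟨q, hq1, hq2, hq3⟩ := mem_image_Icc.1 this
    have := hwinj q p (by omega) (by omega) (by omega) (by omega) hq3
    omega
  have hsub2 : ∀ p, a ≤ p → p ≤ b → a₁ ≤ p ∧ p ≤ b₁ := by
    intro p hp1 hp2
    have : w p ∈ Y₁ := by
      rw [hY₁eq, hXw]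
      exact mem_image_Icc.2 ⟨p, hp1, hp2, rfl⟩
    obtain ⟨q, hq1, hq2, hq3⟩ := mem_image_Icc.1 this
    have := hwinj q p (by omega) (by omega) (by omega) (by omega) hq3
    omega
  have hae : a₁ = a ∧ b₁ = b := by
    have h1 := hsub1 a₁ (le_refl _) ha₁b₁
    have h2 := hsub1 b₁ ha₁b₁ (le_refl _)
    have h3 := hsub2 a (le_refl _) (by omega)
    have h4 := hsub2 b (by omega) (le_refl _)
    omega
  refine ⟨t, w, a, b, hmaxseq, hwinj, ?_, hXw⟩
  rw [← hae.1, ← hae.2]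
  exact hm₁

end StP

/-- Remark 3.16: if `S` is transitive then no two distinct maximal
`S`-cadet sequences of a tree intersect, and maximal `S`-cadet sequences coincide with
`S`-connected cadet sequences. -/
theorem statement_18 {n : ℕ} (S : Fin n → Fin n → Finset ℤ) (hS : TransitiveS S)
    (T : PlaneTree n (mOf S)) :
    (∀ Y Y', IsMaxSCadetSet S T Y → IsMaxSCadetSet S T Y' → Y ≠ Y' → Y ∩ Y' = ∅) ∧
    ∀ X, IsMaxSCadetSet S T X ↔ SConnected S T X := by
  constructor
  · intro Y Y' hY hY' hne
    rcases Finset.eq_empty_or_nonempty (Y ∩ Y') with h | ⟨u, hu⟩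
    · exact h
    · rw [Finset.mem_inter] at hu
      exact absurd (StP.maxsets_eq hS hY hY' hu.1 hu.2) hne
  · exact fun X => ⟨StP.sconn_of_max hS, StP.max_of_sconn hS⟩
end
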